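/- arXiv:0811.4027 — 3 statements merged into one kernel-verified Lean document; each statement's English description precedes it below -/
import Mathlib

section
/- Let w be a weight on the unit circle with all Toeplitz determinants nonzero and let (φ_n, φ̄_n) be a BOPS for w. Assume r_n ≠ 0 for all n ≥ 0 and set ϕ_n := φ_n/κ_n (the monic polynomials). Then for every n ≥ 1 and every z ∈ ℂ: ϕ_(n+1)(z) − (r_(n+1)/r_n) ϕ_n(z) = z · [ ϕ_n(z) − (r_(n+1)/r_n)(1 − r_n r̄_n) ϕ_(n−1)(z) ]. -/
open Polynomial Matrix Filter

noncomputable section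

/-- `(1/(2πi)) ∮_𝕋 f(ζ) dζ/ζ`, written as `(1/(2π)) ∫_0^{2π} f(e^{iθ}) dθ`. -/
def circleAvg (f : ℂ → ℂ) : ℂ :=
  (2 * Real.pi : ℂ)⁻¹ * ∫ θ in (0:ℝ)..(2 * Real.pi), f (Complex.exp (θ * Complex.I))

/-- Fourier coefficient `w_k` of a weight `w` on the unit circle. -/
def fCoeff (w : ℂ → ℂ) (k : ℤ) : ℂ := circleAvg fun ζ => w ζ * ζ ^ (-k)

/-- Toeplitz determinant `I_n[w] = det (w_{j-k})_{j,k=0..n-1}`. -/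
def toeplitzDet (w : ℂ → ℂ) (n : ℕ) : ℂ :=
  (Matrix.of fun j k : Fin n => fCoeff w ((j : ℤ) - (k : ℤ))).det

/-- The Carathéodory function `F(z)`. -/
def cara (w : ℂ → ℂ) (z : ℂ) : ℂ := circleAvg fun ζ => (ζ + z) / (ζ - z) * w ζ

/-- A bi-orthogonal polynomial system (BOPS) on the unit circle for the weight `w`:
polynomials `φ_n`, `φ̄_n` of exact degree `n` with common leading coefficient `κ_n ≠ 0`,
bi-orthonormal with respect to `w`. -/
structure BOPS (w : ℂ → ℂ) where
  φ : ℕ → Polynomial ℂ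
  φb : ℕ → Polynomial ℂ
  κ : ℕ → ℂ
  κ_ne : ∀ n, κ n ≠ 0
  degφ : ∀ n, (φ n).degree ≤ n
  degφb : ∀ n, (φb n).degree ≤ n
  leadφ : ∀ n, (φ n).coeff n = κ n
  leadφb : ∀ n, (φb n).coeff n = κ n
  orth : ∀ m n, circleAvg (fun ζ => w ζ * (φ m).eval ζ * (φb n).eval ζ⁻¹)
      = if m = n then 1 else 0

namespace BOPS

variable {w : ℂ → ℂ}

/-- The reciprocal polynomial `φ*_n(z) = z^n φ̄_n(1/z)`. -/
def φs (S : BOPS w) (n : ℕ) : Polynomial ℂ := (S.φb n).reflect n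

/-- `r_n = φ_n(0)/κ_n`. -/
def r (S : BOPS w) (n : ℕ) : ℂ := (S.φ n).eval 0 / S.κ n

/-- `r̄_n = φ̄_n(0)/κ_n`. -/
def rb (S : BOPS w) (n : ℕ) : ℂ := (S.φb n).eval 0 / S.κ n

/-- Associated function `ξ_n`. -/
def ξ (S : BOPS w) : ℕ → ℂ → ℂ
  | 0, z => S.κ 0 * (fCoeff w 0 + cara w z)
  | n + 1, z => circleAvg fun ζ => (ζ + z) / (ζ - z) * w ζ * (S.φ (n + 1)).eval ζ

/-- Associated function `ξ*_n`. -/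
def ξs (S : BOPS w) : ℕ → ℂ → ℂ
  | 0, z => S.κ 0 * (fCoeff w 0 - cara w z)
  | n + 1, z =>
      -z ^ (n + 1) * circleAvg fun ζ => (ζ + z) / (ζ - z) * w ζ * (S.φb (n + 1)).eval ζ⁻¹

end BOPS

/-- A square matrix of size `K+1` built from a distinguished first row and `K` further rows. -/
def rowMat {K : ℕ} (top : Fin (K + 1) → ℂ) (rest : Fin K → Fin (K + 1) → ℂ) :
    Matrix (Fin (K + 1)) (Fin (K + 1)) ℂ :=
  Matrix.of fun i j => Fin.cases (top j) (fun r => rest r j) i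

end

noncomputable section

namespace Rec

def E (θ : ℝ) : ℂ := Complex.exp (θ * Complex.I)

lemma contE : Continuous E := by
  unfold E; fun_prop

lemma E_ne (θ : ℝ) : E θ ≠ 0 := Complex.exp_ne_zero _

lemma E_mem (θ : ℝ) : E θ ∈ Metric.sphere (0 : ℂ) 1 := by
  simp [E, Metric.mem_sphere, Complex.dist_eq, Complex.norm_exp]

lemma E_inv (θ : ℝ) : (E θ)⁻¹ = E (-θ) := by
  rw [E, E, ← Complex.exp_neg]
  congr 1
  push_cast
  ring

lemma contEinv : Continuous fun θ : ℝ => (E θ)⁻¹ := by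
  simpa only [E_inv, Function.comp_def] using contE.comp (continuous_neg : Continuous fun θ:ℝ => -θ)

lemma circleAvg_eq (f : ℂ → ℂ) :
    circleAvg f = (2 * Real.pi : ℂ)⁻¹ * ∫ θ in (0:ℝ)..(2 * Real.pi), f (E θ) := rfl

lemma avg_congr {f g : ℂ → ℂ} (h : ∀ θ : ℝ, f (E θ) = g (E θ)) :
    circleAvg f = circleAvg g := by
  rw [circleAvg_eq, circleAvg_eq]
  congr 1
  exact intervalIntegral.integral_congr fun θ _ => h θ

lemma avg_add {f g : ℂ → ℂ}
    (hf : IntervalIntegrable (fun θ => f (E θ)) MeasureTheory.volume 0 (2 * Real.pi))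
    (hg : IntervalIntegrable (fun θ => g (E θ)) MeasureTheory.volume 0 (2 * Real.pi)) :
    circleAvg (fun ζ => f ζ + g ζ) = circleAvg f + circleAvg g := by
  rw [circleAvg_eq, circleAvg_eq, circleAvg_eq]
  rw [show (fun θ : ℝ => (f (E θ) + g (E θ))) = fun θ => f (E θ) + g (E θ) from rfl]
  rw [intervalIntegral.integral_add hf hg]
  ring

lemma avg_cmul (a : ℂ) (f : ℂ → ℂ) :
    circleAvg (fun ζ => a * f ζ) = a * circleAvg f := by
  rw [circleAvg_eq, circleAvg_eq, intervalIntegral.integral_const_mul]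
  ring

end Rec

namespace Rec

variable {w : ℂ → ℂ}

/-- The pairing `B p q = (1/2πi)∮ w(ζ) p(ζ) q(1/ζ) dζ/ζ`. -/
def Bp (w : ℂ → ℂ) (p q : Polynomial ℂ) : ℂ :=
  circleAvg fun ζ => w ζ * p.eval ζ * q.eval ζ⁻¹

def Cc (w : ℂ → ℂ) (p : Polynomial ℂ) : ℂ := circleAvg fun ζ => w ζ * (ζ * p.eval ζ)

def Ct (w : ℂ → ℂ) (q : Polynomial ℂ) : ℂ := circleAvg fun ζ => w ζ * (ζ⁻¹ * q.eval ζ⁻¹)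

section integr

variable (hw : ContinuousOn w (Metric.sphere (0 : ℂ) 1))
include hw

lemma contW : Continuous fun θ : ℝ => w (E θ) :=
  hw.comp_continuous contE E_mem

omit hw in
lemma contP (p : Polynomial ℂ) : Continuous fun θ : ℝ => p.eval (E θ) :=
  (p.continuous_aeval).comp contE

omit hw in
omit hw in
lemma contPinv (q : Polynomial ℂ) : Continuous fun θ : ℝ => q.eval (E θ)⁻¹ :=
  (q.continuous_aeval).comp contEinv

lemma intgB (p q : Polynomial ℂ) :
    IntervalIntegrable (fun θ => w (E θ) * p.eval (E θ) * q.eval (E θ)⁻¹)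
      MeasureTheory.volume 0 (2 * Real.pi) :=
  (((contW hw).mul (contP p)).mul (contPinv q)).intervalIntegrable _ _

lemma intgCt (q : Polynomial ℂ) :
    IntervalIntegrable (fun θ => w (E θ) * ((E θ)⁻¹ * q.eval (E θ)⁻¹))
      MeasureTheory.volume 0 (2 * Real.pi) :=
  ((contW hw).mul (contEinv.mul (contPinv q))).intervalIntegrable _ _

lemma intgCc (p : Polynomial ℂ) :
    IntervalIntegrable (fun θ => w (E θ) * (E θ * p.eval (E θ)))
      MeasureTheory.volume 0 (2 * Real.pi) :=
  ((contW hw).mul (contE.mul (contP p))).intervalIntegrable _ _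

lemma Bp_add_left (p p' q : Polynomial ℂ) :
    Bp w (p + p') q = Bp w p q + Bp w p' q := by
  unfold Bp
  rw [show (fun ζ => w ζ * (p + p').eval ζ * q.eval ζ⁻¹)
      = fun ζ => (w ζ * p.eval ζ * q.eval ζ⁻¹) + (w ζ * p'.eval ζ * q.eval ζ⁻¹) by
    funext ζ; simp [eval_add]; ring]
  exact avg_add (intgB hw p q) (intgB hw p' q)

omit hw in
lemma Bp_smul_left (a : ℂ) (p q : Polynomial ℂ) :
    Bp w (a • p) q = a * Bp w p q := by
  unfold Bp
  rw [show (fun ζ => w ζ * (a • p).eval ζ * q.eval ζ⁻¹)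
      = fun ζ => a * (w ζ * p.eval ζ * q.eval ζ⁻¹) by
    funext ζ; simp; ring]
  exact avg_cmul _ _

omit hw in
lemma Bp_zero_left (q : Polynomial ℂ) : Bp w 0 q = 0 := by
  unfold Bp
  rw [show (fun ζ => w ζ * (0 : Polynomial ℂ).eval ζ * q.eval ζ⁻¹) = fun _ => (0:ℂ) * 0 by
    funext ζ; simp]
  simpa using avg_cmul 0 (fun _ => (0:ℂ))

lemma Bp_sub_left (p p' q : Polynomial ℂ) :
    Bp w (p - p') q = Bp w p q - Bp w p' q := by
  have h := Bp_add_left hw (p - p') p' q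
  rw [sub_add_cancel] at h
  rw [h]; ring

lemma Bp_add_right (p q q' : Polynomial ℂ) :
    Bp w p (q + q') = Bp w p q + Bp w p q' := by
  unfold Bp
  rw [show (fun ζ => w ζ * p.eval ζ * (q + q').eval ζ⁻¹)
      = fun ζ => (w ζ * p.eval ζ * q.eval ζ⁻¹) + (w ζ * p.eval ζ * q'.eval ζ⁻¹) by
    funext ζ; simp [eval_add]; ring]
  exact avg_add (intgB hw p q) (intgB hw p q')

omit hw in
lemma Bp_smul_right (a : ℂ) (p q : Polynomial ℂ) :
    Bp w p (a • q) = a * Bp w p q := by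
  unfold Bp
  rw [show (fun ζ => w ζ * p.eval ζ * (a • q).eval ζ⁻¹)
      = fun ζ => a * (w ζ * p.eval ζ * q.eval ζ⁻¹) by
    funext ζ; simp; ring]
  exact avg_cmul _ _

lemma Bp_sub_right (p q q' : Polynomial ℂ) :
    Bp w p (q - q') = Bp w p q - Bp w p q' := by
  have h := Bp_add_right hw p (q - q') q'
  rw [sub_add_cancel] at h
  rw [h]; ring

end integr

end Rec

namespace Rec

variable {w : ℂ → ℂ} (hw : ContinuousOn w (Metric.sphere (0 : ℂ) 1))

lemma divX_X_mul' (p : Polynomial ℂ) : (X * p).divX = p := by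
  ext k
  rw [coeff_divX, coeff_X_mul]

lemma eval_split (p : Polynomial ℂ) (ζ : ℂ) :
    p.eval ζ = ζ * p.divX.eval ζ + p.eval 0 := by
  conv_lhs => rw [← X_mul_divX_add p]
  simp [coeff_zero_eq_eval_zero]

include hw

/-- `B(p, X q) = p(0)·C̃(q) + B(divX p, q)`. -/
lemma Bp_X_right (p q : Polynomial ℂ) :
    Bp w p (X * q) = p.eval 0 * Ct w q + Bp w p.divX q := by
  have h1 : Bp w p (X * q) = circleAvg (fun ζ =>
      p.eval 0 * (w ζ * (ζ⁻¹ * q.eval ζ⁻¹)) + w ζ * p.divX.eval ζ * q.eval ζ⁻¹) := by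
    apply avg_congr
    intro θ
    have hz : E θ ≠ 0 := E_ne θ
    simp only [eval_mul, eval_X]
    rw [eval_split p (E θ)]
    field_simp
    ring
  have hint1 : IntervalIntegrable
      (fun θ => p.eval 0 * (w (E θ) * ((E θ)⁻¹ * q.eval (E θ)⁻¹)))
      MeasureTheory.volume 0 (2 * Real.pi) :=
    (continuous_const.mul ((contW hw).mul (contEinv.mul (contPinv q)))).intervalIntegrable _ _
  rw [h1, avg_add (f := fun ζ => p.eval 0 * (w ζ * (ζ⁻¹ * q.eval ζ⁻¹)))
      (g := fun ζ => w ζ * p.divX.eval ζ * q.eval ζ⁻¹) hint1 (intgB hw p.divX q), avg_cmul]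
  rfl

/-- `B(X p, q) = q(0)·C(p) + B(p, divX q)`. -/
lemma Bp_X_left (p q : Polynomial ℂ) :
    Bp w (X * p) q = q.eval 0 * Cc w p + Bp w p q.divX := by
  have h1 : Bp w (X * p) q = circleAvg (fun ζ =>
      q.eval 0 * (w ζ * (ζ * p.eval ζ)) + w ζ * p.eval ζ * q.divX.eval ζ⁻¹) := by
    apply avg_congr
    intro θ
    have hz : E θ ≠ 0 := E_ne θ
    simp only [eval_mul, eval_X]
    rw [eval_split q ((E θ)⁻¹)]
    field_simp
    ring
  have hint1 : IntervalIntegrable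
      (fun θ => q.eval 0 * (w (E θ) * (E θ * p.eval (E θ))))
      MeasureTheory.volume 0 (2 * Real.pi) :=
    (continuous_const.mul ((contW hw).mul (contE.mul (contP p)))).intervalIntegrable _ _
  rw [h1, avg_add (f := fun ζ => q.eval 0 * (w ζ * (ζ * p.eval ζ)))
      (g := fun ζ => w ζ * p.eval ζ * q.divX.eval ζ⁻¹) hint1 (intgB hw p q.divX), avg_cmul]
  rfl

end Rec

namespace Rec

variable {w : ℂ → ℂ} (hw : ContinuousOn w (Metric.sphere (0 : ℂ) 1)) (S : BOPS w)

lemma orthB (m n : ℕ) : Bp w (S.φ m) (S.φb n) = if m = n then 1 else 0 := S.orth m n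

lemma coeff_φ_high (m k : ℕ) (h : m < k) : (S.φ m).coeff k = 0 :=
  coeff_eq_zero_of_degree_lt (lt_of_le_of_lt (S.degφ m) (by exact_mod_cast h))

lemma coeff_φb_high (m k : ℕ) (h : m < k) : (S.φb m).coeff k = 0 :=
  coeff_eq_zero_of_degree_lt (lt_of_le_of_lt (S.degφb m) (by exact_mod_cast h))

include hw

lemma Bp_lowdeg_left (m : ℕ) :
    ∀ d : ℕ, d ≤ m → ∀ p : Polynomial ℂ, (∀ k, d ≤ k → p.coeff k = 0) →
      Bp w p (S.φb m) = 0 := by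
  intro d
  induction d with
  | zero =>
    intro _ p hp
    have hp0 : p = 0 := by ext k; simpa using hp k (Nat.zero_le k)
    rw [hp0]; exact Bp_zero_left _
  | succ d ih =>
    intro hdm p hp
    set c := p.coeff d / S.κ d with hc
    have hcoeff : ∀ k, d ≤ k → (p - c • S.φ d).coeff k = 0 := by
      intro k hk
      rcases eq_or_lt_of_le hk with rfl | h
      · rw [coeff_sub, coeff_smul, smul_eq_mul, S.leadφ d, hc,
          div_mul_cancel₀ _ (S.κ_ne d), sub_self]
      · have h1 : p.coeff k = 0 := hp k (by omega)
        have h2 : (S.φ d).coeff k = 0 := coeff_φ_high S d k h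
        simp [coeff_sub, coeff_smul, h1, h2]
    have hsplit : Bp w p (S.φb m)
        = Bp w (p - c • S.φ d) (S.φb m) + c * Bp w (S.φ d) (S.φb m) := by
      rw [← Bp_smul_left, ← Bp_add_left hw, sub_add_cancel]
    rw [hsplit, ih (by omega) _ hcoeff, orthB, if_neg (by omega)]
    ring

lemma Bp_lowdeg_right (m : ℕ) :
    ∀ d : ℕ, d ≤ m → ∀ q : Polynomial ℂ, (∀ k, d ≤ k → q.coeff k = 0) →
      Bp w (S.φ m) q = 0 := by
  intro d
  induction d with
  | zero =>
    intro _ q hq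
    have hq0 : q = 0 := by ext k; simpa using hq k (Nat.zero_le k)
    rw [hq0]
    have : Bp w (S.φ m) (0 - 0) = Bp w (S.φ m) 0 - Bp w (S.φ m) 0 := Bp_sub_right hw _ _ _
    simpa using this
  | succ d ih =>
    intro hdm q hq
    set c := q.coeff d / S.κ d with hc
    have hcoeff : ∀ k, d ≤ k → (q - c • S.φb d).coeff k = 0 := by
      intro k hk
      rcases eq_or_lt_of_le hk with rfl | h
      · rw [coeff_sub, coeff_smul, smul_eq_mul, S.leadφb d, hc,
          div_mul_cancel₀ _ (S.κ_ne d), sub_self]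
      · have h1 : q.coeff k = 0 := hq k (by omega)
        have h2 : (S.φb d).coeff k = 0 := coeff_φb_high S d k h
        simp [coeff_sub, coeff_smul, h1, h2]
    have hsplit : Bp w (S.φ m) q
        = Bp w (S.φ m) (q - c • S.φb d) + c * Bp w (S.φ m) (S.φb d) := by
      rw [← Bp_smul_right, ← Bp_add_right hw, sub_add_cancel]
    rw [hsplit, ih (by omega) _ hcoeff, orthB, if_neg (by omega)]
    ring

lemma Bp_coeff_left (m : ℕ) (p : Polynomial ℂ) (hp : ∀ k, m < k → p.coeff k = 0) :
    Bp w p (S.φb m) = p.coeff m / S.κ m := by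
  set c := p.coeff m / S.κ m with hc
  have hcoeff : ∀ k, m ≤ k → (p - c • S.φ m).coeff k = 0 := by
    intro k hk
    rcases eq_or_lt_of_le hk with rfl | h
    · rw [coeff_sub, coeff_smul, smul_eq_mul, S.leadφ m, hc,
        div_mul_cancel₀ _ (S.κ_ne m), sub_self]
    · have h1 : p.coeff k = 0 := hp k h
      have h2 : (S.φ m).coeff k = 0 := coeff_φ_high S m k h
      simp [coeff_sub, coeff_smul, h1, h2]
  have hsplit : Bp w p (S.φb m)
      = Bp w (p - c • S.φ m) (S.φb m) + c * Bp w (S.φ m) (S.φb m) := by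
    rw [← Bp_smul_left, ← Bp_add_left hw, sub_add_cancel]
  rw [hsplit, Bp_lowdeg_left hw S m m le_rfl _ hcoeff, orthB, if_pos rfl]
  ring

lemma Bp_coeff_right (m : ℕ) (q : Polynomial ℂ) (hq : ∀ k, m < k → q.coeff k = 0) :
    Bp w (S.φ m) q = q.coeff m / S.κ m := by
  set c := q.coeff m / S.κ m with hc
  have hcoeff : ∀ k, m ≤ k → (q - c • S.φb m).coeff k = 0 := by
    intro k hk
    rcases eq_or_lt_of_le hk with rfl | h
    · rw [coeff_sub, coeff_smul, smul_eq_mul, S.leadφb m, hc,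
        div_mul_cancel₀ _ (S.κ_ne m), sub_self]
    · have h1 : q.coeff k = 0 := hq k h
      have h2 : (S.φb m).coeff k = 0 := coeff_φb_high S m k h
      simp [coeff_sub, coeff_smul, h1, h2]
  have hsplit : Bp w (S.φ m) q
      = Bp w (S.φ m) (q - c • S.φb m) + c * Bp w (S.φ m) (S.φb m) := by
    rw [← Bp_smul_right, ← Bp_add_right hw, sub_add_cancel]
  rw [hsplit, Bp_lowdeg_right hw S m m le_rfl _ hcoeff, orthB, if_pos rfl]
  ring

lemma expand :
    ∀ d : ℕ, ∀ p : Polynomial ℂ, (∀ k, d ≤ k → p.coeff k = 0) →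
      p = ∑ j ∈ Finset.range d, (Bp w p (S.φb j)) • S.φ j := by
  intro d
  induction d with
  | zero =>
    intro p hp
    have : p = 0 := by ext k; simpa using hp k (Nat.zero_le k)
    simp [this]
  | succ d ih =>
    intro p hp
    set c := p.coeff d / S.κ d with hc
    set p' := p - c • S.φ d with hp'
    have hcoeff : ∀ k, d ≤ k → p'.coeff k = 0 := by
      intro k hk
      rcases eq_or_lt_of_le hk with rfl | h
      · rw [hp', coeff_sub, coeff_smul, smul_eq_mul, S.leadφ d, hc,
          div_mul_cancel₀ _ (S.κ_ne d), sub_self]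
      · have h1 : p.coeff k = 0 := hp k (by omega)
        have h2 : (S.φ d).coeff k = 0 := coeff_φ_high S d k h
        simp [hp', coeff_sub, coeff_smul, h1, h2]
    have hBc : Bp w p (S.φb d) = c := Bp_coeff_left hw S d p (fun k h => hp k (by omega))
    have hsame : ∀ j ∈ Finset.range d, (Bp w p' (S.φb j)) • S.φ j = (Bp w p (S.φb j)) • S.φ j := by
      intro j hj
      have hjd : j ≠ d := by simp at hj; omega
      have : Bp w p' (S.φb j) = Bp w p (S.φb j) - c * Bp w (S.φ d) (S.φb j) := by
        rw [hp', Bp_sub_left hw, Bp_smul_left]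
      rw [this, orthB, if_neg (fun h => hjd h.symm), mul_zero, sub_zero]
    calc p = p' + c • S.φ d := (sub_add_cancel p (c • S.φ d)).symm
      _ = (∑ j ∈ Finset.range d, (Bp w p' (S.φb j)) • S.φ j) + c • S.φ d := by
          rw [← ih p' hcoeff]
      _ = (∑ j ∈ Finset.range d, (Bp w p (S.φb j)) • S.φ j) + (Bp w p (S.φb d)) • S.φ d := by
          rw [Finset.sum_congr rfl hsame, hBc]
      _ = ∑ j ∈ Finset.range (d + 1), (Bp w p (S.φb j)) • S.φ j :=
          (Finset.sum_range_succ _ _).symm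

end Rec

namespace Rec

variable {w : ℂ → ℂ} (hw : ContinuousOn w (Metric.sphere (0 : ℂ) 1)) (S : BOPS w)

lemma coeff_divX_vanish (q : Polynomial ℂ) (j : ℕ) (hq : ∀ k, j < k → q.coeff k = 0) :
    ∀ k, j ≤ k → q.divX.coeff k = 0 := by
  intro k hk
  rw [coeff_divX]
  exact hq (k + 1) (by omega)

include hw

/-- The cross identity `φ̄_{m+1}(0)·C(φ_m) = κ_m/κ_{m+1} − κ_{m+1}/κ_m`. -/
lemma cross (m : ℕ) :
    (S.φb (m + 1)).eval 0 * Cc w (S.φ m) = S.κ m / S.κ (m + 1) - S.κ (m + 1) / S.κ m := by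
  have h1 : Bp w (X * S.φ m) (S.φb (m + 1)) = S.κ m / S.κ (m + 1) := by
    rw [Bp_coeff_left hw S (m + 1) _ ?_, coeff_X_mul, S.leadφ m]
    intro k hk
    obtain ⟨k', rfl⟩ : ∃ k', k = k' + 1 := ⟨k - 1, by omega⟩
    rw [coeff_X_mul]
    exact coeff_φ_high S m k' (by omega)
  have h2 : Bp w (S.φ m) ((S.φb (m + 1)).divX) = S.κ (m + 1) / S.κ m := by
    rw [Bp_coeff_right hw S m _ (coeff_divX_vanish _ _ (fun k hk => coeff_φb_high S (m+1) k hk)),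
      coeff_divX, S.leadφb (m + 1)]
  have h3 := Bp_X_left hw (S.φ m) (S.φb (m + 1))
  rw [h1, h2] at h3
  linear_combination -h3

/-- Key identity: `κ_m² φ_{m+1}(0) φ̄_{m+1}(0) = Ssum(m+1) (κ_{m+1}² − κ_m²)`. -/
lemma keyU (m : ℕ) :
    S.κ m ^ 2 * ((S.φ (m + 1)).eval 0 * (S.φb (m + 1)).eval 0)
      = (∑ j ∈ Finset.range (m + 1), (S.φ j).eval 0 * (S.φb j).eval 0)
          * (S.κ (m + 1) ^ 2 - S.κ m ^ 2) := by
  set u : Polynomial ℂ := S.κ m • S.φ (m + 1) - S.κ (m + 1) • (X * S.φ m) with hu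
  have hucoeff : ∀ k, m + 1 ≤ k → u.coeff k = 0 := by
    intro k hk
    obtain ⟨k', rfl⟩ : ∃ k', k = k' + 1 := ⟨k - 1, by omega⟩
    rw [hu, coeff_sub, coeff_smul, coeff_smul, coeff_X_mul, smul_eq_mul, smul_eq_mul]
    rcases eq_or_lt_of_le hk with h | h
    · rw [show k' = m by omega, S.leadφ (m + 1), S.leadφ m]
      ring
    · rw [coeff_φ_high S (m + 1) (k' + 1) (by omega), coeff_φ_high S m k' (by omega)]
      ring
  have hBu : ∀ j, j ≤ m → Bp w u (S.φb j)
      = -(S.κ (m + 1) * Cc w (S.φ m)) * (S.φb j).eval 0 := by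
    intro j hj
    have e1 : Bp w (S.φ (m + 1)) (S.φb j) = 0 := by
      rw [orthB, if_neg (by omega)]
    have e2 : Bp w (S.φ m) ((S.φb j).divX) = 0 :=
      Bp_lowdeg_right hw S m j hj _
        (coeff_divX_vanish _ _ (fun k hk => coeff_φb_high S j k hk))
    rw [hu, Bp_sub_left hw, Bp_smul_left, Bp_smul_left, e1,
      Bp_X_left hw, e2]
    ring
  have hexp := expand hw S (m + 1) u hucoeff
  have heval := congrArg (Polynomial.eval 0) hexp
  rw [eval_finset_sum] at heval
  have heval2 : S.κ m * (S.φ (m + 1)).eval 0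
      = -(S.κ (m + 1) * Cc w (S.φ m))
          * ∑ j ∈ Finset.range (m + 1), (S.φ j).eval 0 * (S.φb j).eval 0 := by
    have hl : u.eval 0 = S.κ m * (S.φ (m + 1)).eval 0 := by
      rw [hu]; simp
    have hr : ∀ j ∈ Finset.range (m + 1),
        ((Bp w u (S.φb j)) • S.φ j).eval 0
          = -(S.κ (m + 1) * Cc w (S.φ m)) * ((S.φ j).eval 0 * (S.φb j).eval 0) := by
      intro j hj
      rw [eval_smul, smul_eq_mul, hBu j (by simp at hj; omega)]
      ring
    rw [hl, Finset.sum_congr rfl hr, ← Finset.mul_sum] at heval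
    exact heval
  have hc := cross hw S m
  have hκm := S.κ_ne m
  have hκm1 := S.κ_ne (m + 1)
  -- multiply heval2 by κ_m * φb_{m+1}(0) and substitute hc
  field_simp at hc
  linear_combination (S.κ m * (S.φb (m+1)).eval 0) * heval2
    - (∑ j ∈ Finset.range (m + 1), (S.φ j).eval 0 * (S.φb j).eval 0) * hc

lemma Ssum_eq : ∀ m : ℕ,
    (∑ j ∈ Finset.range (m + 1), (S.φ j).eval 0 * (S.φb j).eval 0) = S.κ m ^ 2 := by
  intro m
  induction m with
  | zero =>
    rw [Finset.sum_range_one, ← coeff_zero_eq_eval_zero, ← coeff_zero_eq_eval_zero,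
      S.leadφ 0, S.leadφb 0, sq]
  | succ m ih =>
    have hkey := keyU hw S m
    rw [ih] at hkey
    have hprod : (S.φ (m + 1)).eval 0 * (S.φb (m + 1)).eval 0
        = S.κ (m + 1) ^ 2 - S.κ m ^ 2 :=
      mul_left_cancel₀ (pow_ne_zero 2 (S.κ_ne m)) hkey
    rw [Finset.sum_range_succ, ih, hprod]
    ring

lemma prod0 (m : ℕ) :
    (S.φ (m + 1)).eval 0 * (S.φb (m + 1)).eval 0 = S.κ (m + 1) ^ 2 - S.κ m ^ 2 := by
  have hkey := keyU hw S m
  rw [Ssum_eq hw S m] at hkey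
  exact mul_left_cancel₀ (pow_ne_zero 2 (S.κ_ne m)) hkey

end Rec

end

/-- second-order recurrence for the monic bi-orthogonal polynomials. -/
theorem monic_recurrence (w : ℂ → ℂ)
    (hw : ContinuousOn w (Metric.sphere (0 : ℂ) 1))
    (hI : ∀ n, toeplitzDet w n ≠ 0) (S : BOPS w)
    (hr : ∀ n, S.r n ≠ 0)
    (n : ℕ) (hn : 1 ≤ n) (z : ℂ) :
    (S.φ (n + 1)).eval z / S.κ (n + 1) - S.r (n + 1) / S.r n * ((S.φ n).eval z / S.κ n)
      = z * ((S.φ n).eval z / S.κ n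
          - S.r (n + 1) / S.r n * (1 - S.r n * S.rb n)
              * ((S.φ (n - 1)).eval z / S.κ (n - 1))) := by
  
  obtain ⟨m, rfl⟩ : ∃ m, n = m + 1 := ⟨n - 1, (Nat.succ_pred_eq_of_pos hn).symm⟩
  rw [show m + 1 - 1 = m from rfl]
  simp only [show m + 1 + 1 = m + 2 from rfl]
  open Rec in
  set ρ : ℂ := S.r (m + 2) / S.r (m + 1) with hρ
  set c : ℂ := ρ * (1 - S.r (m + 1) * S.rb (m + 1)) with hcdef
  set P : Polynomial ℂ :=
      (S.κ (m + 2))⁻¹ • S.φ (m + 2) - (ρ * (S.κ (m + 1))⁻¹) • S.φ (m + 1)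
        - (S.κ (m + 1))⁻¹ • (X * S.φ (m + 1)) + (c * (S.κ m)⁻¹) • (X * S.φ m) with hP
  have hκ2 := S.κ_ne (m + 2)
  have hκ1 := S.κ_ne (m + 1)
  have hκ0 := S.κ_ne m
  have hP0 : P.eval 0 = 0 := by
    rw [hP]
    simp only [eval_add, eval_sub, eval_smul, smul_eq_mul, eval_mul, eval_X, zero_mul,
      mul_zero, add_zero, sub_zero]
    rw [hρ]
    simp only [BOPS.r]
    have hφ0 : (S.φ (m + 1)).eval 0 ≠ 0 := by
      intro h; exact hr (m + 1) (by rw [BOPS.r, h, zero_div])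
    field_simp [hφ0]
    ring
  have hPcoeff : ∀ k, m + 2 ≤ k → P.coeff k = 0 := by
    intro k hk
    obtain ⟨k', rfl⟩ : ∃ k', k = k' + 1 := ⟨k - 1, by omega⟩
    rw [hP, coeff_add, coeff_sub, coeff_sub, coeff_smul, coeff_smul, coeff_smul, coeff_smul,
      coeff_X_mul, coeff_X_mul, smul_eq_mul, smul_eq_mul, smul_eq_mul, smul_eq_mul]
    rcases eq_or_lt_of_le hk with h | h
    · rw [show k' = m + 1 by omega, S.leadφ (m + 2), Rec.coeff_φ_high S (m + 1) (m + 2) (by omega),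
        S.leadφ (m + 1), Rec.coeff_φ_high S m (m + 1) (by omega)]
      field_simp
      ring
    · rw [Rec.coeff_φ_high S (m + 2) (k' + 1) (by omega),
        Rec.coeff_φ_high S (m + 1) (k' + 1) (by omega),
        Rec.coeff_φ_high S (m + 1) k' (by omega),
        Rec.coeff_φ_high S m k' (by omega)]
      ring
  have hPX : P = X * P.divX := by
    conv_lhs => rw [← X_mul_divX_add P]
    rw [coeff_zero_eq_eval_zero, hP0, map_zero, add_zero]
  have hQcoeff : ∀ k, m + 1 ≤ k → P.divX.coeff k = 0 := by
    intro k hk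
    rw [coeff_divX]
    exact hPcoeff (k + 1) (by omega)
  have hprod := Rec.prod0 hw S m
  have hBQ : ∀ j, j ≤ m → Bp w P.divX (S.φb j) = 0 := by
    intro j hj
    have h4 := Bp_X_right hw P (S.φb j)
    rw [hP0, zero_mul, zero_add] at h4
    have hlin : Bp w P (X * S.φb j)
        = (S.κ (m + 2))⁻¹ * Bp w (S.φ (m + 2)) (X * S.φb j)
          - (ρ * (S.κ (m + 1))⁻¹) * Bp w (S.φ (m + 1)) (X * S.φb j)
          - (S.κ (m + 1))⁻¹ * Bp w (X * S.φ (m + 1)) (X * S.φb j)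
          + (c * (S.κ m)⁻¹) * Bp w (X * S.φ m) (X * S.φb j) := by
      rw [hP, Bp_add_left hw, Bp_sub_left hw, Bp_sub_left hw, Bp_smul_left, Bp_smul_left,
        Bp_smul_left, Bp_smul_left]
    have hXv : ∀ k, j + 2 ≤ k → (X * S.φb j).coeff k = 0 := by
      intro k hk
      obtain ⟨k', rfl⟩ : ∃ k', k = k' + 1 := ⟨k - 1, by omega⟩
      rw [coeff_X_mul]
      exact Rec.coeff_φb_high S j k' (by omega)
    have t1 : Bp w (S.φ (m + 2)) (X * S.φb j) = 0 :=
      Bp_lowdeg_right hw S (m + 2) (j + 2) (by omega) _ hXv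
    have t2 : Bp w (S.φ (m + 1)) (X * S.φb j)
        = (S.φb j).coeff m / S.κ (m + 1) := by
      rw [Bp_coeff_right hw S (m + 1) _ (fun k hk => hXv k (by omega)), coeff_X_mul]
    have t3 : Bp w (X * S.φ (m + 1)) (X * S.φb j) = 0 := by
      rw [Bp_X_right hw, divX_X_mul', eval_mul, eval_X, zero_mul, zero_mul, zero_add,
        orthB, if_neg (by omega)]
    have t4 : Bp w (X * S.φ m) (X * S.φb j)
        = if m = j then 1 else 0 := by
      rw [Bp_X_right hw, divX_X_mul', eval_mul, eval_X, zero_mul, zero_mul, zero_add, orthB]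
    rw [← h4, hlin, t1, t2, t3, t4]
    rcases eq_or_lt_of_le hj with rfl | hjm
    · rw [if_pos rfl, S.leadφb j]
      -- c κ_{j+1}² = ρ κ_j² from prod0
      have hrr : S.r (j + 1) * S.rb (j + 1)
          = (S.κ (j + 1) ^ 2 - S.κ j ^ 2) / S.κ (j + 1) ^ 2 := by
        rw [BOPS.r, BOPS.rb, div_mul_div_comm, hprod, sq]
      rw [hcdef, hrr]
      field_simp
      ring
    · rw [if_neg (by omega), Rec.coeff_φb_high S j m hjm]
      ring
  have hQ0 : P.divX = 0 := by
    rw [Rec.expand hw S (m + 1) P.divX hQcoeff]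
    apply Finset.sum_eq_zero
    intro j hj
    rw [hBQ j (by simp at hj; omega), zero_smul]
  have hPzero : P = 0 := by rw [hPX, hQ0, mul_zero]
  have hz := congrArg (Polynomial.eval z) hPzero
  rw [hP] at hz
  simp only [eval_add, eval_sub, eval_smul, smul_eq_mul, eval_mul, eval_X, eval_zero] at hz
  rw [hρ] at hz ⊢
  rw [hcdef] at hz
  field_simp at hz ⊢
  linear_combination hz
end

section
/- Let w be a weight on the unit circle with all Toeplitz determinants nonzero and let (φ_n, φ̄_n) be a BOPS for w, with associated functions ξ_n, ξ*_n. For z ∈ ℂ∖𝕋 define g_j(z) := 2z · (1/(2πi)) ∮_𝕋 (ζ^j/(ζ−z)) w(ζ) dζ/ζ. Then for every n ≥ 1 and z ∈ ℂ∖𝕋: (i) ξ_n(z) = (κ_n/I_n[w]) · det M, where M is the (n+1)×(n+1) matrix with entries M_(i,j) = w_(i−j) for 0 ≤ i ≤ n−1, 0 ≤ j ≤ n, and last row M_(n,j) = g_j(z); (ii) ξ*_n(z) = −(κ_n/I_n[w]) · det M*, where M* is the (n+1)×(n+1) matrix with entries M*_(i,j) = w_(i−j) for 0 ≤ i ≤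 n, 0 ≤ j ≤ n−1, and last column M*_(i,n) = g_(n−i)(z). -/
open Polynomial Matrix Filter

/-- `g_j(z) := 2z (1/(2πi)) ∮_𝕋 (ζ^j/(ζ-z)) w(ζ) dζ/ζ`. -/
noncomputable def gfun (w : ℂ → ℂ) (j : ℕ) (z : ℂ) : ℂ :=
  2 * z * circleAvg fun ζ => ζ ^ j / (ζ - z) * w ζ

namespace AssocAux
open Polynomial Finset

noncomputable section

abbrev eθ (θ : ℝ) : ℂ := Complex.exp (θ * Complex.I)

lemma eθ_ne (θ : ℝ) : eθ θ ≠ 0 := Complex.exp_ne_zero _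
lemma eθ_mem (θ : ℝ) : eθ θ ∈ Metric.sphere (0:ℂ) 1 := by simp [eθ, Complex.norm_exp]
lemma eθ_cont : Continuous eθ :=
  Complex.continuous_exp.comp (Complex.continuous_ofReal.mul continuous_const)

def CC (f : ℂ → ℂ) : Prop := Continuous fun θ : ℝ => f (eθ θ)

lemma CC.mul' {f g : ℂ → ℂ} (hf : CC f) (hg : CC g) : CC fun ζ => f ζ * g ζ :=
  Continuous.mul hf hg
lemma CC.cmul {f : ℂ → ℂ} (c : ℂ) (hf : CC f) : CC fun ζ => c * f ζ := continuous_const.mul hf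
lemma CC_zpow (m : ℤ) : CC fun ζ => ζ ^ m :=
  Continuous.zpow₀ eθ_cont m (fun θ => Or.inl (eθ_ne θ))
lemma CC_w {w : ℂ → ℂ} (hw : ContinuousOn w (Metric.sphere (0:ℂ) 1)) : CC w :=
  hw.comp_continuous eθ_cont eθ_mem
lemma sub_z_ne {z : ℂ} (hz : ‖z‖ ≠ 1) (θ : ℝ) : eθ θ - z ≠ 0 := by
  intro h
  apply hz
  have : z = eθ θ := by linear_combination -h
  rw [this]; simpa using (eθ_mem θ)
lemma CC_inv {z : ℂ} (hz : ‖z‖ ≠ 1) : CC fun ζ => (ζ - z)⁻¹ :=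
  Continuous.inv₀ (eθ_cont.sub continuous_const) (sub_z_ne hz)

lemma CC.intInt {f : ℂ → ℂ} (hf : CC f) :
    IntervalIntegrable (fun θ : ℝ => f (eθ θ)) MeasureTheory.volume 0 (2*Real.pi) :=
  hf.intervalIntegrable _ _

lemma avg_congr {f g : ℂ → ℂ} (h : ∀ θ : ℝ, f (eθ θ) = g (eθ θ)) :
    circleAvg f = circleAvg g := by
  unfold circleAvg; congr 1; exact intervalIntegral.integral_congr fun θ _ => h θ

lemma avg_cmul (c : ℂ) (f : ℂ → ℂ) :
    circleAvg (fun ζ => c * f ζ) = c * circleAvg f := by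
  unfold circleAvg; rw [intervalIntegral.integral_const_mul]; ring

lemma avg_add {f g : ℂ → ℂ} (hf : CC f) (hg : CC g) :
    circleAvg (fun ζ => f ζ + g ζ) = circleAvg f + circleAvg g := by
  unfold circleAvg; rw [intervalIntegral.integral_add hf.intInt hg.intInt]; ring

lemma avg_sum {ι : Type*} (s : Finset ι) (f : ι → ℂ → ℂ) (h : ∀ i ∈ s, CC (f i)) :
    circleAvg (fun ζ => ∑ i ∈ s, f i ζ) = ∑ i ∈ s, circleAvg (f i) := by
  unfold circleAvg
  rw [intervalIntegral.integral_finset_sum (fun i hi => (h i hi).intInt), Finset.mul_sum]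

lemma avg_moment (w : ℂ → ℂ) (a : ℤ) :
    circleAvg (fun ζ => w ζ * ζ ^ a) = fCoeff w (-a) := by
  simp [fCoeff]

lemma eval_sum_range {p : Polynomial ℂ} {M : ℕ} (hp : p.degree ≤ M) (x : ℂ) :
    p.eval x = ∑ k ∈ range (M + 1), p.coeff k * x ^ k :=
  Polynomial.eval_eq_sum_range' (Nat.lt_succ_of_le (Polynomial.natDegree_le_iff_degree_le.2 hp)) x

variable {w : ℂ → ℂ} {z : ℂ}

lemma avg_pq (hw : ContinuousOn w (Metric.sphere (0:ℂ) 1))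
    (p q : Polynomial ℂ) {M N : ℕ} (hp : p.degree ≤ M) (hq : q.degree ≤ N) :
    circleAvg (fun ζ => w ζ * p.eval ζ * q.eval ζ⁻¹)
      = ∑ k ∈ range (M + 1), ∑ j ∈ range (N + 1),
          p.coeff k * q.coeff j * fCoeff w ((j : ℤ) - (k : ℤ)) := by
  have key : circleAvg (fun ζ => w ζ * p.eval ζ * q.eval ζ⁻¹)
      = circleAvg (fun ζ => ∑ k ∈ range (M+1), ∑ j ∈ range (N+1),
          (p.coeff k * q.coeff j) * (w ζ * ζ ^ ((k : ℤ) - (j : ℤ)))) := by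
    apply avg_congr
    intro θ
    set ζ := eθ θ with hζdef
    have hζ : ζ ≠ 0 := eθ_ne θ
    rw [eval_sum_range hp, eval_sum_range hq, mul_assoc, Finset.sum_mul_sum, Finset.mul_sum]
    apply Finset.sum_congr rfl
    intro k _
    rw [Finset.mul_sum]
    apply Finset.sum_congr rfl
    intro j _
    have hzz : ζ ^ ((k : ℤ) - (j : ℤ)) = ζ ^ k * (ζ⁻¹) ^ j := by
      rw [zpow_sub₀ hζ, zpow_natCast, zpow_natCast, inv_pow, div_eq_mul_inv]
    rw [hzz]; ring
  rw [key, avg_sum]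
  · refine Finset.sum_congr rfl fun k _ => ?_
    rw [avg_sum]
    · refine Finset.sum_congr rfl fun j _ => ?_
      rw [avg_cmul, avg_moment, neg_sub]
    · intro j _
      exact CC.cmul _ (CC.mul' (CC_w hw) (CC_zpow _))
  · intro k _
    exact continuous_finset_sum _ fun j _ => CC.cmul _ (CC.mul' (CC_w hw) (CC_zpow _))

lemma orth_sum (hw : ContinuousOn w (Metric.sphere (0:ℂ) 1)) (S : BOPS w) (m l : ℕ) :
    ∑ k ∈ range (m + 1), ∑ j ∈ range (l + 1),
        (S.φ m).coeff k * (S.φb l).coeff j * fCoeff w ((j : ℤ) - (k : ℤ))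
      = if m = l then 1 else 0 := by
  rw [← avg_pq hw _ _ (S.degφ m) (S.degφb l)]
  exact S.orth m l

/-- orthogonality of `φ_n` to negative monomials `ζ^{-l}`, `l < n`, in moment form. -/
lemma monoOrthL (hw : ContinuousOn w (Metric.sphere (0:ℂ) 1)) (S : BOPS w) {n : ℕ} :
    ∀ l, l < n → ∑ k ∈ range (n + 1), (S.φ n).coeff k * fCoeff w ((l : ℤ) - (k : ℤ)) = 0 := by
  intro l
  induction l using Nat.strong_induction_on with
  | _ l IH =>
    intro hl
    have h0 := orth_sum hw S n l
    rw [if_neg (by omega)] at h0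
    have h1 : ∑ j ∈ range (l + 1), (S.φb l).coeff j *
        (∑ k ∈ range (n + 1), (S.φ n).coeff k * fCoeff w ((j : ℤ) - (k : ℤ))) = 0 := by
      rw [← h0, Finset.sum_comm]
      refine Finset.sum_congr rfl fun j _ => ?_
      rw [Finset.mul_sum]
      exact Finset.sum_congr rfl fun k _ => by ring
    rw [Finset.sum_range_succ] at h1
    have h2 : ∑ j ∈ range l, (S.φb l).coeff j *
        (∑ k ∈ range (n + 1), (S.φ n).coeff k * fCoeff w ((j : ℤ) - (k : ℤ))) = 0 :=
      Finset.sum_eq_zero fun j hj => by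
        rw [IH j (Finset.mem_range.1 hj) (lt_trans (Finset.mem_range.1 hj) hl), mul_zero]
    rw [h2, zero_add, S.leadφb l] at h1
    exact (mul_eq_zero.1 h1).resolve_left (S.κ_ne l)

/-- orthogonality of `φ̄_n` to monomials `ζ^{l}`, `l < n`, in moment form. -/
lemma monoOrthR (hw : ContinuousOn w (Metric.sphere (0:ℂ) 1)) (S : BOPS w) {n : ℕ} :
    ∀ l, l < n → ∑ j ∈ range (n + 1), (S.φb n).coeff j * fCoeff w ((j : ℤ) - (l : ℤ)) = 0 := by
  intro l
  induction l using Nat.strong_induction_on with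
  | _ l IH =>
    intro hl
    have h0 := orth_sum hw S l n
    rw [if_neg (by omega)] at h0
    have h1 : ∑ k ∈ range (l + 1), (S.φ l).coeff k *
        (∑ j ∈ range (n + 1), (S.φb n).coeff j * fCoeff w ((j : ℤ) - (k : ℤ))) = 0 := by
      rw [← h0]
      refine Finset.sum_congr rfl fun k _ => ?_
      rw [Finset.mul_sum]
      exact Finset.sum_congr rfl fun j _ => by ring
    rw [Finset.sum_range_succ] at h1
    have h2 : ∑ k ∈ range l, (S.φ l).coeff k *
        (∑ j ∈ range (n + 1), (S.φb n).coeff j * fCoeff w ((j : ℤ) - (k : ℤ))) = 0 :=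
      Finset.sum_eq_zero fun k hk => by
        rw [IH k (Finset.mem_range.1 hk) (lt_trans (Finset.mem_range.1 hk) hl), mul_zero]
    rw [h2, zero_add, S.leadφ l] at h1
    exact (mul_eq_zero.1 h1).resolve_left (S.κ_ne l)

/-- `H m = (1/2πi)∮ w(ζ) ζ^m/(ζ-z) dζ/ζ`. -/
def auxH (w : ℂ → ℂ) (z : ℂ) (m : ℤ) : ℂ :=
  circleAvg fun ζ => w ζ * ζ ^ m * (ζ - z)⁻¹

lemma gfun_eq (j : ℕ) : gfun w j z = 2 * z * auxH w z (j : ℤ) := by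
  unfold gfun auxH
  congr 1
  apply avg_congr
  intro θ
  rw [zpow_natCast, div_eq_mul_inv]
  ring

lemma CC_H (hw : ContinuousOn w (Metric.sphere (0:ℂ) 1)) (hz : ‖z‖ ≠ 1) (m : ℤ) :
    CC fun ζ => w ζ * ζ ^ m * (ζ - z)⁻¹ :=
  CC.mul' (CC.mul' (CC_w hw) (CC_zpow m)) (CC_inv hz)

lemma H_rec (hw : ContinuousOn w (Metric.sphere (0:ℂ) 1)) (hz : ‖z‖ ≠ 1) (m : ℤ) :
    auxH w z m = z * auxH w z (m - 1) + fCoeff w (1 - m) := by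
  have key : circleAvg (fun ζ => w ζ * ζ ^ m * (ζ - z)⁻¹)
      = circleAvg (fun ζ => z * (w ζ * ζ ^ (m-1) * (ζ - z)⁻¹) + w ζ * ζ ^ (m-1)) := by
    apply avg_congr
    intro θ
    set ζ := eθ θ with hζdef
    have hζ : ζ ≠ 0 := eθ_ne θ
    have hne : ζ - z ≠ 0 := sub_z_ne hz θ
    have e1 : ζ ^ (m - 1) = ζ ^ m / ζ := by rw [zpow_sub₀ hζ, zpow_one]
    rw [e1]
    field_simp
    ring
  unfold auxH
  rw [key, avg_add (CC.cmul _ (CC_H hw hz _)) (CC.mul' (CC_w hw) (CC_zpow _)), avg_cmul,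
    avg_moment, neg_sub]

lemma H_C1 (hw : ContinuousOn w (Metric.sphere (0:ℂ) 1)) (hz : ‖z‖ ≠ 1) (j : ℕ) :
    z ^ j * auxH w z (-(j : ℤ)) = auxH w z 0 - ∑ l ∈ range j, z ^ l * fCoeff w ((l : ℤ) + 1) := by
  induction j with
  | zero => simp
  | succ j IH =>
    have hr := H_rec hw hz (-(j:ℤ))
    have hstep : z * auxH w z (-((j:ℕ):ℤ) - 1) = auxH w z (-(j:ℤ)) - fCoeff w ((j:ℤ) + 1) := by
      rw [hr]; ring_nf
    have hcast : (-(((j+1):ℕ) : ℤ)) = -((j:ℕ):ℤ) - 1 := by push_cast; ring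
    rw [Finset.sum_range_succ, hcast]
    calc z ^ (j+1) * auxH w z (-((j:ℕ):ℤ) - 1)
        = z ^ j * (z * auxH w z (-((j:ℕ):ℤ) - 1)) := by ring
      _ = z ^ j * (auxH w z (-(j:ℤ)) - fCoeff w ((j:ℤ) + 1)) := by rw [hstep]
      _ = z ^ j * auxH w z (-(j:ℤ)) - z ^ j * fCoeff w ((j:ℤ) + 1) := by ring
      _ = _ := by rw [IH]; ring

lemma H_C2 (hw : ContinuousOn w (Metric.sphere (0:ℂ) 1)) (hz : ‖z‖ ≠ 1) (j : ℕ) :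
    auxH w z (j : ℤ) = z ^ j * auxH w z 0
      + ∑ i ∈ range j, z ^ i * fCoeff w ((i : ℤ) + 1 - (j : ℤ)) := by
  induction j with
  | zero => simp
  | succ j IH =>
    have hr := H_rec hw hz ((j:ℤ) + 1)
    have hc : ((j:ℤ) + 1 - 1) = (j:ℤ) := by ring
    rw [hc] at hr
    have hcast : (((j+1):ℕ) : ℤ) = (j:ℤ) + 1 := by push_cast; ring
    have hs : ∑ i ∈ range (j+1), z ^ i * fCoeff w ((i:ℤ) + 1 - ((j:ℤ)+1))
        = (∑ x ∈ range j, z ^ (x+1) * fCoeff w ((((x+1):ℕ):ℤ) + 1 - ((j:ℤ)+1)))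
          + z ^ 0 * fCoeff w (((0:ℕ):ℤ) + 1 - ((j:ℤ)+1)) := Finset.sum_range_succ' _ j
    rw [hcast, hr, IH, hs]
    have hx : ∀ x ∈ range j, z ^ (x+1) * fCoeff w ((((x+1):ℕ):ℤ) + 1 - ((j:ℤ)+1))
        = z * (z ^ x * fCoeff w ((x:ℤ) + 1 - (j:ℤ))) := by
      intro x _
      have e : (((x+1):ℕ):ℤ) + 1 - ((j:ℤ)+1) = (x:ℤ) + 1 - (j:ℤ) := by push_cast; ring
      rw [e]; ring
    have h0 : ((0:ℕ):ℤ) + 1 - ((j:ℤ)+1) = 1 - ((j:ℤ)+1) := by push_cast; ring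
    rw [Finset.sum_congr rfl hx, ← Finset.mul_sum, h0]
    ring

lemma H_C3 (hw : ContinuousOn w (Metric.sphere (0:ℂ) 1)) (hz : ‖z‖ ≠ 1)
    {j n : ℕ} (hj : j ≤ n) :
    z ^ n * auxH w z (-(j : ℤ)) = auxH w z (((n - j : ℕ) : ℤ))
      - ∑ s ∈ range n, z ^ s * fCoeff w ((s : ℤ) + 1 - (n : ℤ) + (j : ℤ)) := by
  have h1 : z ^ n * auxH w z (-(j : ℤ))
      = z ^ (n - j) * (z ^ j * auxH w z (-(j : ℤ))) := by
    rw [← mul_assoc, ← pow_add, Nat.sub_add_cancel hj]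
  rw [h1, H_C1 hw hz j, H_C2 hw hz (n - j), mul_sub, Finset.mul_sum]
  have hsplit : ∑ s ∈ range n, z ^ s * fCoeff w ((s : ℤ) + 1 - (n : ℤ) + (j : ℤ))
      = (∑ i ∈ range (n - j), z ^ i * fCoeff w ((i : ℤ) + 1 - (n : ℤ) + (j : ℤ)))
        + ∑ l ∈ range j, z ^ ((n-j) + l) * fCoeff w ((((n-j) + l : ℕ) : ℤ) + 1 - (n:ℤ) + (j:ℤ)) := by
    have hn : n = (n - j) + j := by omega
    calc ∑ s ∈ range n, z ^ s * fCoeff w ((s : ℤ) + 1 - (n : ℤ) + (j : ℤ))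
        = ∑ s ∈ range ((n-j)+j), z ^ s * fCoeff w ((s : ℤ) + 1 - (n : ℤ) + (j : ℤ)) := by
          rw [← hn]
      _ = _ := Finset.sum_range_add _ _ _
  rw [hsplit]
  have e1 : ∀ i ∈ range (n - j), z ^ i * fCoeff w ((i:ℤ) + 1 - (((n - j:ℕ)):ℤ))
      = z ^ i * fCoeff w ((i : ℤ) + 1 - (n : ℤ) + (j : ℤ)) := by
    intro i _
    have h2 : ((i:ℤ) + 1 - (((n - j:ℕ)):ℤ)) = (i : ℤ) + 1 - (n : ℤ) + (j : ℤ) := by omega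
    rw [h2]
  have e2 : ∀ l ∈ range j, z ^ (n-j) * (z ^ l * fCoeff w ((l:ℤ) + 1))
      = z ^ ((n-j) + l) * fCoeff w ((((n-j) + l : ℕ) : ℤ) + 1 - (n:ℤ) + (j:ℤ)) := by
    intro l _
    have h2 : ((((n-j) + l : ℕ) : ℤ) + 1 - (n:ℤ) + (j:ℤ)) = (l : ℤ) + 1 := by omega
    rw [h2, ← mul_assoc, ← pow_add]
  rw [Finset.sum_congr rfl e1, Finset.sum_congr rfl e2]
  ring

lemma frac_split {ζ : ℂ} (hne : ζ - z ≠ 0) : (ζ + z) / (ζ - z) = 1 + 2 * z * (ζ - z)⁻¹ := by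
  field_simp
  ring

/-- expansion of ξ_n in terms of the g_j. -/
lemma xi_sum (hw : ContinuousOn w (Metric.sphere (0:ℂ) 1)) (hz : ‖z‖ ≠ 1)
    (S : BOPS w) {n : ℕ} (hn : 1 ≤ n)
    (hdef : S.ξ n z = circleAvg fun ζ => (ζ + z) / (ζ - z) * w ζ * (S.φ n).eval ζ) :
    S.ξ n z = ∑ k ∈ range (n + 1), (S.φ n).coeff k * gfun w k z := by
  have expand : S.ξ n z = circleAvg (fun ζ => ∑ k ∈ range (n+1),
      ((S.φ n).coeff k * (w ζ * ζ ^ (k : ℤ))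
        + ((S.φ n).coeff k * (2 * z)) * (w ζ * ζ ^ (k : ℤ) * (ζ - z)⁻¹))) := by
    rw [hdef]
    apply avg_congr
    intro θ
    set ζ := eθ θ with hζdef
    have hζ : ζ ≠ 0 := eθ_ne θ
    have hne : ζ - z ≠ 0 := sub_z_ne hz θ
    rw [eval_sum_range (S.degφ n), Finset.mul_sum]
    refine Finset.sum_congr rfl fun k _ => ?_
    rw [frac_split hne, zpow_natCast]
    ring
  rw [expand, avg_sum]
  · have term : ∀ k ∈ range (n+1), circleAvg (fun ζ =>
        (S.φ n).coeff k * (w ζ * ζ ^ (k : ℤ))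
          + ((S.φ n).coeff k * (2 * z)) * (w ζ * ζ ^ (k : ℤ) * (ζ - z)⁻¹))
        = (S.φ n).coeff k * fCoeff w (((0:ℕ):ℤ) - (k:ℤ)) + (S.φ n).coeff k * gfun w k z := by
      intro k _
      rw [avg_add (CC.cmul _ (CC.mul' (CC_w hw) (CC_zpow _))) (CC.cmul _ (CC_H hw hz _)),
        avg_cmul, avg_cmul, avg_moment, gfun_eq]
      have h0 : -(k:ℤ) = ((0:ℕ):ℤ) - (k:ℤ) := by push_cast; ring
      rw [h0]
      show _ = _ * _ + _ * (2 * z * auxH w z k)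
      unfold auxH
      ring
    rw [Finset.sum_congr rfl term, Finset.sum_add_distrib]
    rw [monoOrthL hw S 0 hn, zero_add]
  · intro k _
    exact Continuous.add (CC.cmul _ (CC.mul' (CC_w hw) (CC_zpow _))) (CC.cmul _ (CC_H hw hz _))

/-- expansion of ξ*_n in terms of the g_{n-j}. -/
lemma xis_sum (hw : ContinuousOn w (Metric.sphere (0:ℂ) 1)) (hz : ‖z‖ ≠ 1)
    (S : BOPS w) {n : ℕ} (hn : 1 ≤ n)
    (hdef : S.ξs n z
      = -z ^ n * circleAvg fun ζ => (ζ + z) / (ζ - z) * w ζ * (S.φb n).eval ζ⁻¹) :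
    S.ξs n z = -∑ j ∈ range (n + 1), (S.φb n).coeff j * gfun w (n - j) z := by
  have expand : circleAvg (fun ζ => (ζ + z) / (ζ - z) * w ζ * (S.φb n).eval ζ⁻¹)
      = circleAvg (fun ζ => ∑ j ∈ range (n+1),
      ((S.φb n).coeff j * (w ζ * ζ ^ (-(j : ℤ)))
        + ((S.φb n).coeff j * (2 * z)) * (w ζ * ζ ^ (-(j : ℤ)) * (ζ - z)⁻¹))) := by
    apply avg_congr
    intro θ
    set ζ := eθ θ with hζdef
    have hζ : ζ ≠ 0 := eθ_ne θ
    have hne : ζ - z ≠ 0 := sub_z_ne hz θ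
    rw [eval_sum_range (S.degφb n), Finset.mul_sum]
    refine Finset.sum_congr rfl fun j _ => ?_
    have hip : (ζ⁻¹) ^ j = ζ ^ (-(j:ℤ)) := by
      rw [_root_.zpow_neg, zpow_natCast, inv_pow]
    rw [frac_split hne, hip]
    ring
  have term : ∀ j ∈ range (n+1), circleAvg (fun ζ =>
      (S.φb n).coeff j * (w ζ * ζ ^ (-(j : ℤ)))
        + ((S.φb n).coeff j * (2 * z)) * (w ζ * ζ ^ (-(j : ℤ)) * (ζ - z)⁻¹))
      = (S.φb n).coeff j * fCoeff w (j:ℤ) + ((S.φb n).coeff j * (2 * z)) * auxH w z (-(j:ℤ)) := by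
    intro j _
    rw [avg_add (CC.cmul _ (CC.mul' (CC_w hw) (CC_zpow _))) (CC.cmul _ (CC_H hw hz _)),
      avg_cmul, avg_cmul, avg_moment, neg_neg]
    rfl
  have hξs : S.ξs n z = ∑ j ∈ range (n+1), (-(z^n) * ((S.φb n).coeff j * fCoeff w (j:ℤ))
      + (-2 * (S.φb n).coeff j * z) * (z^n * auxH w z (-(j:ℤ)))) := by
    rw [hdef, expand, avg_sum]
    · rw [Finset.sum_congr rfl term, Finset.mul_sum]
      exact Finset.sum_congr rfl fun j _ => by ring
    · intro j _
      exact Continuous.add (CC.cmul _ (CC.mul' (CC_w hw) (CC_zpow _))) (CC.cmul _ (CC_H hw hz _))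
  rw [hξs]
  have key : ∀ j ∈ range (n+1), (-(z^n) * ((S.φb n).coeff j * fCoeff w (j:ℤ))
      + (-2 * (S.φb n).coeff j * z) * (z^n * auxH w z (-(j:ℤ))))
      = -((S.φb n).coeff j * gfun w (n - j) z)
        + (-(z^n) * ((S.φb n).coeff j * fCoeff w (j:ℤ))
          + (2*z) * ∑ s ∈ range n, (S.φb n).coeff j * (z ^ s * fCoeff w ((s:ℤ)+1-(n:ℤ)+(j:ℤ)))) := by
    intro j hj
    rw [H_C3 hw hz (Nat.lt_succ_iff.1 (Finset.mem_range.1 hj)), gfun_eq, ← Finset.mul_sum]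
    ring
  rw [Finset.sum_congr rfl key, Finset.sum_add_distrib, Finset.sum_add_distrib]
  have t1 : ∑ j ∈ range (n+1), -((S.φb n).coeff j * gfun w (n - j) z)
      = -∑ j ∈ range (n+1), (S.φb n).coeff j * gfun w (n - j) z := by
    rw [Finset.sum_neg_distrib]
  have t2 : ∑ j ∈ range (n+1), -(z^n) * ((S.φb n).coeff j * fCoeff w (j:ℤ)) = 0 := by
    rw [← Finset.mul_sum]
    have h0 : ∑ j ∈ range (n+1), (S.φb n).coeff j * fCoeff w (j:ℤ)
        = ∑ j ∈ range (n+1), (S.φb n).coeff j * fCoeff w ((j:ℤ) - ((0:ℕ):ℤ)) := by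
      refine Finset.sum_congr rfl fun j _ => ?_
      norm_num
    rw [h0, monoOrthR hw S 0 hn, mul_zero]
  have t3 : ∑ j ∈ range (n+1), (2*z) * (∑ s ∈ range n,
      (S.φb n).coeff j * (z ^ s * fCoeff w ((s:ℤ)+1-(n:ℤ)+(j:ℤ)))) = 0 := by
    rw [← Finset.mul_sum, Finset.sum_comm]
    have inner : ∀ s ∈ range n, ∑ j ∈ range (n+1),
        (S.φb n).coeff j * (z ^ s * fCoeff w ((s:ℤ)+1-(n:ℤ)+(j:ℤ))) = 0 := by
      intro s hs
      have hsn : s < n := Finset.mem_range.1 hs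
      have harg : ∀ j : ℕ, (s:ℤ)+1-(n:ℤ)+(j:ℤ) = (j:ℤ) - ((n-1-s : ℕ):ℤ) := by
        intro j; omega
      have step : ∀ j ∈ range (n+1), (S.φb n).coeff j * (z ^ s * fCoeff w ((s:ℤ)+1-(n:ℤ)+(j:ℤ)))
          = z ^ s * ((S.φb n).coeff j * fCoeff w ((j:ℤ) - ((n-1-s : ℕ):ℤ))) := by
        intro j _
        rw [harg j]
        ring
      rw [Finset.sum_congr rfl step, ← Finset.mul_sum, monoOrthR hw S (n-1-s) (by omega), mul_zero]
    rw [Finset.sum_congr rfl inner, Finset.sum_const_zero, mul_zero]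
  rw [t1, t2, t3, add_zero, add_zero]

end
end AssocAux

namespace AssocAux
open Polynomial Finset
noncomputable section
variable {w : ℂ → ℂ} {z : ℂ}

lemma final1 (hw : ContinuousOn w (Metric.sphere (0:ℂ) 1)) (hz : ‖z‖ ≠ 1)
    (S : BOPS w) {n : ℕ} (hn : 1 ≤ n) (hI : toeplitzDet w n ≠ 0)
    (hxi : S.ξ n z = ∑ k ∈ range (n+1), (S.φ n).coeff k * gfun w k z) :
    S.ξ n z = S.κ n / toeplitzDet w n *
      (Matrix.of fun i j : Fin (n + 1) =>
        if (i : ℕ) < n then fCoeff w ((i : ℤ) - (j : ℤ)) else gfun w (j : ℕ) z).det := by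
  classical
  set D : Matrix (Fin (n+1)) (Fin (n+1)) ℂ :=
    Matrix.of (fun i j : Fin (n + 1) =>
      if (i : ℕ) < n then fCoeff w ((i : ℤ) - (j : ℤ)) else gfun w (j : ℕ) z) with hD
  set u : Fin (n+1) → ℂ := fun k => (S.φ n).coeff k with hu
  set M : Matrix (Fin (n+1)) (Fin (n+1)) ℂ :=
    (1 : Matrix (Fin (n+1)) (Fin (n+1)) ℂ).updateCol (Fin.last n) u with hM
  have hdetM : M.det = S.κ n := by
    rw [hM, ← Matrix.cramer_apply, Matrix.cramer_one]
    show u (Fin.last n) = S.κ n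
    rw [hu]
    show (S.φ n).coeff ((Fin.last n : Fin (n+1)) : ℕ) = S.κ n
    rw [Fin.val_last, S.leadφ n]
  have hDM : ∀ i j, (D * M) i j = if j = Fin.last n then (∑ k, D i k * u k) else D i j := by
    intro i j
    rw [Matrix.mul_apply]
    by_cases hj : j = Fin.last n
    · rw [if_pos hj, hj]
      refine Finset.sum_congr rfl fun k _ => ?_
      rw [hM, Matrix.updateCol_apply, if_pos rfl]
    · rw [if_neg hj]
      have : ∀ k, M k j = if k = j then (1:ℂ) else 0 := by
        intro k
        rw [hM, Matrix.updateCol_apply, if_neg hj, Matrix.one_apply]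
      simp only [this, mul_ite, mul_one, mul_zero]
      rw [Finset.sum_ite_eq' Finset.univ j (fun k => D i k)]
      simp
  have hrow0 : ∀ i : Fin (n+1), (i : ℕ) < n → (∑ k, D i k * u k) = 0 := by
    intro i hi
    have hc : ∀ k : Fin (n+1), D i k * u k
        = (S.φ n).coeff (k : ℕ) * fCoeff w (((i:ℕ) : ℤ) - ((k:ℕ) : ℤ)) := by
      intro k
      rw [hD, hu]
      show (if (i : ℕ) < n then fCoeff w ((i : ℤ) - (k : ℤ)) else gfun w (k : ℕ) z) * _ = _
      rw [if_pos hi]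
      ring
    rw [Fintype.sum_congr _ _ hc,
      Fin.sum_univ_eq_sum_range (fun k => (S.φ n).coeff k * fCoeff w (((i:ℕ):ℤ) - (k : ℤ)))]
    exact monoOrthL hw S (i : ℕ) hi
  have hlastrow : (∑ k, D (Fin.last n) k * u k) = S.ξ n z := by
    have hc : ∀ k : Fin (n+1), D (Fin.last n) k * u k
        = (S.φ n).coeff (k : ℕ) * gfun w (k : ℕ) z := by
      intro k
      rw [hD, hu]
      show (if ((Fin.last n : Fin (n+1)) : ℕ) < n then _ else gfun w (k : ℕ) z) * _ = _
      rw [Fin.val_last, if_neg (lt_irrefl n)]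
      ring
    rw [Fintype.sum_congr _ _ hc,
      Fin.sum_univ_eq_sum_range (fun k => (S.φ n).coeff k * gfun w k z), ← hxi]
  -- block structure
  set T : Matrix (Fin n) (Fin n) ℂ :=
    Matrix.of (fun j k : Fin n => fCoeff w ((j : ℤ) - (k : ℤ))) with hT
  set G : Matrix (Fin 1) (Fin n) ℂ := Matrix.of (fun _ j => gfun w (j : ℕ) z) with hG
  set X : Matrix (Fin 1) (Fin 1) ℂ := Matrix.of (fun _ _ => S.ξ n z) with hX
  have hblock : (D * M).submatrix finSumFinEquiv finSumFinEquiv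
      = Matrix.fromBlocks T 0 G X := by
    ext i j
    cases i with
    | inl a =>
      cases j with
      | inl b =>
        have hb : (finSumFinEquiv (Sum.inl b) : Fin (n+1)) ≠ Fin.last n := by
          have h1 : ((finSumFinEquiv (Sum.inl b) : Fin (n+1)) : ℕ) = (b : ℕ) := by simp
          have h2 := b.isLt
          intro h
          rw [h, Fin.val_last] at h1
          omega
        show (D * M) (finSumFinEquiv (Sum.inl a)) (finSumFinEquiv (Sum.inl b)) = T a b
        rw [hDM, if_neg hb, hD]
        simp only [finSumFinEquiv_apply_left, Matrix.of_apply]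
        rw [if_pos (by simpa using b.isLt)]
        simp [hT, Fin.coe_castAdd]
      | inr b =>
        have hb : (finSumFinEquiv (Sum.inr b) : Fin (n+1)) = Fin.last n := by
          have h1 : ((finSumFinEquiv (Sum.inr b) : Fin (n+1)) : ℕ) = n + (b : ℕ) := by simp
          have h2 := b.isLt
          apply Fin.ext
          rw [h1, Fin.val_last]
          omega
        show (D * M) (finSumFinEquiv (Sum.inl a)) (finSumFinEquiv (Sum.inr b)) = 0
        rw [hDM, if_pos hb]
        exact hrow0 _ (by simpa using a.isLt)
    | inr a =>
      have ha : (finSumFinEquiv (Sum.inr a) : Fin (n+1)) = Fin.last n := by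
        have h1 : ((finSumFinEquiv (Sum.inr a) : Fin (n+1)) : ℕ) = n + (a : ℕ) := by simp
        have h2 := a.isLt
        apply Fin.ext
        rw [h1, Fin.val_last]
        omega
      cases j with
      | inl b =>
        have hb : (finSumFinEquiv (Sum.inl b) : Fin (n+1)) ≠ Fin.last n := by
          have h1 : ((finSumFinEquiv (Sum.inl b) : Fin (n+1)) : ℕ) = (b : ℕ) := by simp
          have h2 := b.isLt
          intro h
          rw [h, Fin.val_last] at h1
          omega
        show (D * M) (finSumFinEquiv (Sum.inr a)) (finSumFinEquiv (Sum.inl b)) = G a b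
        rw [hDM, if_neg hb, ha, hD]
        simp only [Matrix.of_apply]
        rw [if_neg (by simp [Fin.val_last])]
        simp [hG]
      | inr b =>
        show (D * M) (finSumFinEquiv (Sum.inr a)) (finSumFinEquiv (Sum.inr b)) = X a b
        have hb : (finSumFinEquiv (Sum.inr b) : Fin (n+1)) = Fin.last n := by
          have h1 : ((finSumFinEquiv (Sum.inr b) : Fin (n+1)) : ℕ) = n + (b : ℕ) := by simp
          have h2 := b.isLt
          apply Fin.ext
          rw [h1, Fin.val_last]
          omega
        rw [hDM, if_pos hb, ha, hlastrow]
        simp [hX]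
  have hdet : D.det * S.κ n = toeplitzDet w n * S.ξ n z := by
    calc D.det * S.κ n = D.det * M.det := by rw [hdetM]
      _ = (D * M).det := (Matrix.det_mul D M).symm
      _ = ((D * M).submatrix finSumFinEquiv finSumFinEquiv).det :=
          (Matrix.det_submatrix_equiv_self _ _).symm
      _ = (Matrix.fromBlocks T 0 G X).det := by rw [hblock]
      _ = T.det * X.det := Matrix.det_fromBlocks_zero₁₂ T G X
      _ = toeplitzDet w n * S.ξ n z := by
          rw [Matrix.det_fin_one]
          rfl
  rw [div_mul_eq_mul_div, eq_div_iff hI]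
  linear_combination -hdet

lemma final2 (hw : ContinuousOn w (Metric.sphere (0:ℂ) 1)) (hz : ‖z‖ ≠ 1)
    (S : BOPS w) {n : ℕ} (hn : 1 ≤ n) (hI : toeplitzDet w n ≠ 0)
    (hxis : S.ξs n z = -∑ j ∈ range (n+1), (S.φb n).coeff j * gfun w (n - j) z) :
    S.ξs n z = -(S.κ n / toeplitzDet w n) *
      (Matrix.of fun i j : Fin (n + 1) =>
        if (j : ℕ) < n then fCoeff w ((i : ℤ) - (j : ℤ)) else gfun w (n - (i : ℕ)) z).det := by
  classical
  set D : Matrix (Fin (n+1)) (Fin (n+1)) ℂ :=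
    Matrix.of (fun i j : Fin (n + 1) =>
      if (j : ℕ) < n then fCoeff w ((i : ℤ) - (j : ℤ)) else gfun w (n - (i : ℕ)) z) with hD
  set v : Fin (n+1) → ℂ := fun k => (S.φb n).coeff k with hv
  set M : Matrix (Fin (n+1)) (Fin (n+1)) ℂ :=
    (1 : Matrix (Fin (n+1)) (Fin (n+1)) ℂ).updateRow (Fin.last n) v with hM
  have hdetM : M.det = S.κ n := by
    rw [hM, ← Matrix.cramer_transpose_apply, Matrix.transpose_one, Matrix.cramer_one]
    show v (Fin.last n) = S.κ n
    rw [hv]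
    show (S.φb n).coeff ((Fin.last n : Fin (n+1)) : ℕ) = S.κ n
    rw [Fin.val_last, S.leadφb n]
  have hMD : ∀ i j, (M * D) i j = if i = Fin.last n then (∑ k, v k * D k j) else D i j := by
    intro i j
    rw [Matrix.mul_apply]
    by_cases hi : i = Fin.last n
    · rw [if_pos hi, hi]
      refine Finset.sum_congr rfl fun k _ => ?_
      rw [hM, Matrix.updateRow_apply, if_pos rfl]
    · rw [if_neg hi]
      have : ∀ k, M i k = if i = k then (1:ℂ) else 0 := by
        intro k
        rw [hM, Matrix.updateRow_apply, if_neg hi, Matrix.one_apply]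
      simp only [this, ite_mul, one_mul, zero_mul]
      rw [Finset.sum_ite_eq Finset.univ i (fun k => D k j)]
      simp
  have hcol0 : ∀ j : Fin (n+1), (j : ℕ) < n → (∑ k, v k * D k j) = 0 := by
    intro j hj
    have hc : ∀ k : Fin (n+1), v k * D k j
        = (S.φb n).coeff (k : ℕ) * fCoeff w (((k:ℕ) : ℤ) - ((j:ℕ) : ℤ)) := by
      intro k
      rw [hD, hv]
      show _ * (if (j : ℕ) < n then fCoeff w ((k : ℤ) - (j : ℤ)) else gfun w (n - (k : ℕ)) z) = _
      rw [if_pos hj]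
    rw [Fintype.sum_congr _ _ hc,
      Fin.sum_univ_eq_sum_range (fun k => (S.φb n).coeff k * fCoeff w ((k:ℤ) - ((j:ℕ) : ℤ)))]
    exact monoOrthR hw S (j : ℕ) hj
  have hlastcol : (∑ k, v k * D k (Fin.last n)) = -S.ξs n z := by
    have hc : ∀ k : Fin (n+1), v k * D k (Fin.last n)
        = (S.φb n).coeff (k : ℕ) * gfun w (n - (k : ℕ)) z := by
      intro k
      rw [hD, hv]
      show _ * (if ((Fin.last n : Fin (n+1)) : ℕ) < n then _ else gfun w (n - (k : ℕ)) z) = _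
      rw [Fin.val_last, if_neg (lt_irrefl n)]
    rw [Fintype.sum_congr _ _ hc,
      Fin.sum_univ_eq_sum_range (fun k => (S.φb n).coeff k * gfun w (n - k) z)]
    rw [hxis, neg_neg]
  set T : Matrix (Fin n) (Fin n) ℂ :=
    Matrix.of (fun j k : Fin n => fCoeff w ((j : ℤ) - (k : ℤ))) with hT
  set G : Matrix (Fin n) (Fin 1) ℂ := Matrix.of (fun i _ => gfun w (n - (i : ℕ)) z) with hG
  set X : Matrix (Fin 1) (Fin 1) ℂ := Matrix.of (fun _ _ => -S.ξs n z) with hX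
  have hblock : (M * D).submatrix finSumFinEquiv finSumFinEquiv
      = Matrix.fromBlocks T G 0 X := by
    ext i j
    cases i with
    | inl a =>
      have ha : (finSumFinEquiv (Sum.inl a) : Fin (n+1)) ≠ Fin.last n := by
        have h1 : ((finSumFinEquiv (Sum.inl a) : Fin (n+1)) : ℕ) = (a : ℕ) := by simp
        have h2 := a.isLt
        intro h
        rw [h, Fin.val_last] at h1
        omega
      cases j with
      | inl b =>
        show (M * D) _ _ = T a b
        rw [hMD, if_neg ha, hD]
        simp only [finSumFinEquiv_apply_left, Matrix.of_apply]
        rw [if_pos (by simpa using b.isLt)]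
        simp [hT, Fin.coe_castAdd]
      | inr b =>
        show (M * D) _ _ = G a b
        rw [hMD, if_neg ha, hD]
        simp only [finSumFinEquiv_apply_left, finSumFinEquiv_apply_right, Matrix.of_apply]
        rw [if_neg (by simp [Fin.val_last])]
        simp [hG]
    | inr a =>
      have ha : (finSumFinEquiv (Sum.inr a) : Fin (n+1)) = Fin.last n := by
        have h1 : ((finSumFinEquiv (Sum.inr a) : Fin (n+1)) : ℕ) = n + (a : ℕ) := by simp
        have h2 := a.isLt
        apply Fin.ext
        rw [h1, Fin.val_last]
        omega
      cases j with
      | inl b =>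
        show (M * D) _ _ = 0
        rw [hMD, if_pos ha]
        exact hcol0 _ (by simpa using b.isLt)
      | inr b =>
        show (M * D) _ _ = X a b
        have hb : (finSumFinEquiv (Sum.inr b) : Fin (n+1)) = Fin.last n := by
          have h1 : ((finSumFinEquiv (Sum.inr b) : Fin (n+1)) : ℕ) = n + (b : ℕ) := by simp
          have h2 := b.isLt
          apply Fin.ext
          rw [h1, Fin.val_last]
          omega
        rw [hMD, if_pos ha, hb, hlastcol]
        simp [hX]
  have hdet : S.κ n * D.det = toeplitzDet w n * (-S.ξs n z) := by
    calc S.κ n * D.det = M.det * D.det := by rw [hdetM]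
      _ = (M * D).det := (Matrix.det_mul M D).symm
      _ = ((M * D).submatrix finSumFinEquiv finSumFinEquiv).det :=
          (Matrix.det_submatrix_equiv_self _ _).symm
      _ = (Matrix.fromBlocks T G 0 X).det := by rw [hblock]
      _ = T.det * X.det := Matrix.det_fromBlocks_zero₂₁ T G X
      _ = toeplitzDet w n * (-S.ξs n z) := by
          rw [Matrix.det_fin_one]
          rfl
  rw [neg_mul, div_mul_eq_mul_div, ← neg_div, eq_div_iff hI]
  linear_combination hdet

end
end AssocAux


/-- determinantal representations of the associated functions. -/
theorem assoc_fn_det_representation (w : ℂ → ℂ)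
    (hw : ContinuousOn w (Metric.sphere (0 : ℂ) 1))
    (hI : ∀ n, toeplitzDet w n ≠ 0) (S : BOPS w)
    (n : ℕ) (hn : 1 ≤ n) (z : ℂ) (hz : ‖z‖ ≠ 1) :
    S.ξ n z = S.κ n / toeplitzDet w n *
      (Matrix.of fun i j : Fin (n + 1) =>
        if (i : ℕ) < n then fCoeff w ((i : ℤ) - (j : ℤ)) else gfun w (j : ℕ) z).det ∧
    S.ξs n z = -(S.κ n / toeplitzDet w n) *
      (Matrix.of fun i j : Fin (n + 1) =>
        if (j : ℕ) < n then fCoeff w ((i : ℤ) - (j : ℤ)) else gfun w (n - (i : ℕ)) z).det := by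
  obtain ⟨m, rfl⟩ : ∃ m, n = m + 1 := ⟨n - 1, by omega⟩
  constructor
  · exact AssocAux.final1 hw hz S (by omega) (hI (m+1))
      (AssocAux.xi_sum hw hz S (by omega) rfl)
  · exact AssocAux.final2 hw hz S (by omega) (hI (m+1))
      (AssocAux.xis_sum hw hz S (by omega) rfl)
end

section
/- Let w be a weight on the unit circle with all Toeplitz determinants nonzero and let (φ_n, φ̄_n) be a BOPS for w, with reciprocal polynomials φ*_n and associated functions ξ_n, ξ*_n. Then: (i) for every n ≥ 0 and every z ∈ ℂ, I_n[(ζ−z)·w] = (−1)^n I_n[w] φ_n(z)/κ_n and I_n[(1−zζ^(−1))·w] = I_n[w] φ*_n(z)/κ_n; (ii) for every n ≥ 1 and every z ∈ ℂ∖(𝕋∪{0}), I_n[w/(1−zζ^(−1))] = I_n[w] κ_(n−1) ξ_(n−1)(z)/(2 z^(n−1)) and I_n[w/(ζ−z)] = (−1)^n I_n[w] κ_(n−1) ξ*_(n−1)(z)/(2 z^n). -/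
open Polynomial Matrix Filter

noncomputable section BOPSAuxSec
namespace BOPSAux

open Polynomial Matrix Finset

/-! ### circle average API -/

/-- Integrand continuity carrier. -/
def CInt (f : ℂ → ℂ) : Prop := Continuous fun θ : ℝ => f (Complex.exp (θ * Complex.I))

lemma CInt.intInt {f : ℂ → ℂ} (hf : CInt f) :
    IntervalIntegrable (fun θ : ℝ => f (Complex.exp (θ * Complex.I)))
      MeasureTheory.volume 0 (2 * Real.pi) := hf.intervalIntegrable _ _

lemma CInt.mul {f g : ℂ → ℂ} (hf : CInt f) (hg : CInt g) : CInt (fun ζ => f ζ * g ζ) :=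
  Continuous.mul hf hg

lemma CInt.add {f g : ℂ → ℂ} (hf : CInt f) (hg : CInt g) : CInt (fun ζ => f ζ + g ζ) :=
  Continuous.add hf hg

lemma CInt.sub {f g : ℂ → ℂ} (hf : CInt f) (hg : CInt g) : CInt (fun ζ => f ζ - g ζ) :=
  Continuous.sub hf hg

lemma CInt.const (c : ℂ) : CInt (fun _ => c) := continuous_const

lemma CInt.of_continuousOn {f : ℂ → ℂ} (hf : ContinuousOn f (Metric.sphere (0:ℂ) 1)) :
    CInt f := by
  apply hf.comp_continuous (by continuity)
  intro θ
  simp [Complex.norm_exp_ofReal_mul_I]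

lemma CInt.zpow (m : ℤ) : CInt (fun ζ : ℂ => ζ ^ m) := by
  have h : (fun θ : ℝ => (Complex.exp (θ * Complex.I)) ^ m)
      = fun θ : ℝ => Complex.exp (m * (θ * Complex.I)) := by
    funext θ; rw [Complex.exp_int_mul]
  show Continuous fun θ : ℝ => (Complex.exp (θ * Complex.I)) ^ m
  rw [h]
  exact Complex.continuous_exp.comp (by continuity)

lemma CInt.eval (p : Polynomial ℂ) : CInt (fun ζ => p.eval ζ) :=
  p.continuous.comp (Complex.continuous_exp.comp (by continuity))

lemma CInt.evalInv (p : Polynomial ℂ) : CInt (fun ζ => p.eval ζ⁻¹) := by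
  have h : (fun θ : ℝ => p.eval ((Complex.exp (θ * Complex.I))⁻¹))
      = fun θ : ℝ => p.eval (Complex.exp (-(θ * Complex.I))) := by
    funext θ; rw [Complex.exp_neg]
  show Continuous fun θ : ℝ => p.eval ((Complex.exp (θ * Complex.I))⁻¹)
  rw [h]
  exact p.continuous.comp (Complex.continuous_exp.comp (by continuity))

lemma sub_ne_zero_of_abs {ζ z : ℂ} (h1 : ‖ζ‖ = 1) (hz : ‖z‖ ≠ 1) :
    ζ - z ≠ 0 := by
  intro h
  rw [sub_eq_zero] at h
  exact hz (by rw [← h, h1])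

lemma CInt.kernel (z : ℂ) (hz : ‖z‖ ≠ 1) :
    CInt (fun ζ => (ζ + z) / (ζ - z)) := by
  show Continuous fun θ : ℝ => (Complex.exp (θ * Complex.I) + z) / (Complex.exp (θ * Complex.I) - z)
  apply Continuous.div (by continuity) (by continuity)
  intro θ
  exact sub_ne_zero_of_abs (Complex.norm_exp_ofReal_mul_I θ) hz

lemma circleAvg_congr {f g : ℂ → ℂ} (h : ∀ ζ : ℂ, ‖ζ‖ = 1 → f ζ = g ζ) :
    circleAvg f = circleAvg g := by
  unfold circleAvg
  congr 1
  apply intervalIntegral.integral_congr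
  intro θ _
  exact h _ (Complex.norm_exp_ofReal_mul_I θ)

lemma circleAvg_add {f g : ℂ → ℂ} (hf : CInt f) (hg : CInt g) :
    circleAvg (fun ζ => f ζ + g ζ) = circleAvg f + circleAvg g := by
  unfold circleAvg
  rw [intervalIntegral.integral_add hf.intInt hg.intInt, mul_add]

lemma circleAvg_sub {f g : ℂ → ℂ} (hf : CInt f) (hg : CInt g) :
    circleAvg (fun ζ => f ζ - g ζ) = circleAvg f - circleAvg g := by
  unfold circleAvg
  rw [intervalIntegral.integral_sub hf.intInt hg.intInt, mul_sub]

lemma circleAvg_const_mul (c : ℂ) (f : ℂ → ℂ) :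
    circleAvg (fun ζ => c * f ζ) = c * circleAvg f := by
  unfold circleAvg
  rw [intervalIntegral.integral_const_mul]
  ring

lemma circleAvg_sum {ι : Type*} (s : Finset ι) (f : ι → ℂ → ℂ)
    (h : ∀ i ∈ s, CInt (f i)) :
    circleAvg (fun ζ => ∑ i ∈ s, f i ζ) = ∑ i ∈ s, circleAvg (f i) := by
  unfold circleAvg
  rw [intervalIntegral.integral_finset_sum (fun i hi => (h i hi).intInt), Finset.mul_sum]

/-! ### moment functionals -/

/-- `Lsum w n m q = ∑_{j≤n} q_j w_{m-j}`, i.e. `(1/2πi)∮ w q(ζ) ζ^{-m} dζ/ζ`. -/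
def Lsum (w : ℂ → ℂ) (n : ℕ) (m : ℤ) (q : Polynomial ℂ) : ℂ :=
  ∑ j ∈ Finset.range (n + 1), q.coeff j * fCoeff w (m - j)

/-- `Lsum' w n m q = ∑_{j≤n} q_j w_{j-m}`, i.e. `(1/2πi)∮ w ζ^m q(1/ζ) dζ/ζ`. -/
def Lsum' (w : ℂ → ℂ) (n : ℕ) (m : ℤ) (q : Polynomial ℂ) : ℂ :=
  ∑ j ∈ Finset.range (n + 1), q.coeff j * fCoeff w (j - m)

lemma Lsum_smul (w : ℂ → ℂ) (n : ℕ) (m : ℤ) (c : ℂ) (q : Polynomial ℂ) :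
    Lsum w n m (c • q) = c * Lsum w n m q := by
  simp [Lsum, Finset.mul_sum, mul_assoc]

lemma Lsum'_smul (w : ℂ → ℂ) (n : ℕ) (m : ℤ) (c : ℂ) (q : Polynomial ℂ) :
    Lsum' w n m (c • q) = c * Lsum' w n m q := by
  simp [Lsum', Finset.mul_sum, mul_assoc]

lemma Lsum_sub (w : ℂ → ℂ) (n : ℕ) (m : ℤ) (p q : Polynomial ℂ) :
    Lsum w n m (p - q) = Lsum w n m p - Lsum w n m q := by
  simp [Lsum, sub_mul, Finset.sum_sub_distrib]

lemma Lsum'_sub (w : ℂ → ℂ) (n : ℕ) (m : ℤ) (p q : Polynomial ℂ) :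
    Lsum' w n m (p - q) = Lsum' w n m p - Lsum' w n m q := by
  simp [Lsum', sub_mul, Finset.sum_sub_distrib]

lemma Lsum_eq_circleAvg {w : ℂ → ℂ} (hw : CInt w) {n : ℕ} {q : Polynomial ℂ}
    (hq : q.natDegree ≤ n) (m : ℤ) :
    Lsum w n m q = circleAvg (fun ζ => w ζ * q.eval ζ * ζ ^ (-m)) := by
  have key : circleAvg (fun ζ => w ζ * q.eval ζ * ζ ^ (-m))
      = circleAvg (fun ζ => ∑ j ∈ Finset.range (n+1),
          q.coeff j * (w ζ * ζ ^ (-(m - (j:ℤ))))) := by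
    apply circleAvg_congr
    intro ζ hζ
    have hζ0 : ζ ≠ 0 := by
      intro h; rw [h] at hζ; simp at hζ
    rw [Polynomial.eval_eq_sum_range' (lt_of_le_of_lt hq (Nat.lt_succ_self n))]
    rw [Finset.mul_sum, Finset.sum_mul]
    apply Finset.sum_congr rfl
    intro j _
    have hp : (ζ : ℂ) ^ (j : ℕ) * ζ ^ (-m) = ζ ^ (-(m - (j:ℤ))) := by
      rw [← zpow_natCast ζ j, ← zpow_add₀ hζ0]
      congr 1
      ring
    calc w ζ * (q.coeff j * ζ ^ (j:ℕ)) * ζ ^ (-m)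
        = q.coeff j * (w ζ * (ζ ^ (j:ℕ) * ζ ^ (-m))) := by ring
      _ = q.coeff j * (w ζ * ζ ^ (-(m - (j:ℤ)))) := by rw [hp]
  rw [key, circleAvg_sum]
  · apply Finset.sum_congr rfl
    intro j _
    rw [circleAvg_const_mul]
    rfl
  · intro j _
    exact (CInt.const _).mul (hw.mul (CInt.zpow _))

lemma Lsum'_eq_circleAvg {w : ℂ → ℂ} (hw : CInt w) {n : ℕ} {q : Polynomial ℂ}
    (hq : q.natDegree ≤ n) (m : ℤ) :
    Lsum' w n m q = circleAvg (fun ζ => w ζ * ζ ^ m * q.eval ζ⁻¹) := by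
  have key : circleAvg (fun ζ => w ζ * ζ ^ m * q.eval ζ⁻¹)
      = circleAvg (fun ζ => ∑ j ∈ Finset.range (n+1),
          q.coeff j * (w ζ * ζ ^ (-((j:ℤ) - m)))) := by
    apply circleAvg_congr
    intro ζ hζ
    have hζ0 : ζ ≠ 0 := by
      intro h; rw [h] at hζ; simp at hζ
    rw [Polynomial.eval_eq_sum_range' (lt_of_le_of_lt hq (Nat.lt_succ_self n))]
    rw [Finset.mul_sum]
    apply Finset.sum_congr rfl
    intro j _
    have hp : (ζ : ℂ) ^ m * (ζ⁻¹) ^ (j : ℕ) = ζ ^ (-((j:ℤ) - m)) := by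
      rw [inv_pow, ← zpow_natCast ζ j, ← _root_.zpow_neg, ← zpow_add₀ hζ0]
      congr 1
      ring
    calc w ζ * ζ ^ m * (q.coeff j * (ζ⁻¹) ^ (j:ℕ))
        = q.coeff j * (w ζ * (ζ ^ m * (ζ⁻¹) ^ (j:ℕ))) := by ring
      _ = q.coeff j * (w ζ * ζ ^ (-((j:ℤ) - m))) := by rw [hp]
  rw [key, circleAvg_sum]
  · apply Finset.sum_congr rfl
    intro j _
    rw [circleAvg_const_mul]
    rfl
  · intro j _
    exact (CInt.const _).mul (hw.mul (CInt.zpow _))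

/-! ### kernel of the Toeplitz matrix -/

lemma vec_eq_zero {n : ℕ} (A : Matrix (Fin n) (Fin n) ℂ) (hA : A.det ≠ 0)
    (c : Fin n → ℂ) (h : A.mulVec c = 0) : c = 0 := by
  have hinj : Function.Injective A.mulVec :=
    Matrix.mulVec_injective_iff_isUnit.2 ((Matrix.isUnit_iff_isUnit_det A).2
      (isUnit_iff_ne_zero.2 hA))
  apply hinj
  rw [h, Matrix.mulVec_zero]


/-! ### uniqueness lemmas -/

lemma eq_of_Lsum_eq {w : ℂ → ℂ} {n : ℕ} (hI : toeplitzDet w n ≠ 0)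
    {p q : Polynomial ℂ} (hp : p.natDegree ≤ n) (hq : q.natDegree ≤ n)
    (h : ∀ m : ℕ, m < n → Lsum w n m p = Lsum w n m q)
    (htop : p.coeff n = q.coeff n) : p = q := by
  have hd : (p - q).natDegree ≤ n :=
    le_trans (Polynomial.natDegree_sub_le p q) (max_le hp hq)
  have hdtop : (p - q).coeff n = 0 := by
    rw [Polynomial.coeff_sub, htop, sub_self]
  have hker : (fun j : Fin n => (p - q).coeff j) = 0 := by
    apply vec_eq_zero (Matrix.of fun j k : Fin n => fCoeff w ((j : ℤ) - (k : ℤ))) hI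
    funext m
    have hLs : Lsum w n m (p - q) = 0 := by
      rw [Lsum_sub, h m m.isLt, sub_self]
    rw [Lsum] at hLs
    rw [Finset.sum_range_succ, hdtop, zero_mul, add_zero] at hLs
    rw [← Fin.sum_univ_eq_sum_range (fun j => (p - q).coeff j * fCoeff w ((m:ℤ) - j)) n] at hLs
    simpa [Matrix.mulVec, dotProduct, mul_comm] using hLs
  have hzero : p - q = 0 := by
    apply Polynomial.ext
    intro k
    rcases lt_trichotomy k n with hk | hk | hk
    · have := congrFun hker ⟨k, hk⟩
      simpa using this
    · rw [hk]; simpa using hdtop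
    · simp [Polynomial.coeff_eq_zero_of_natDegree_lt (lt_of_le_of_lt hd hk)]
  exact sub_eq_zero.mp hzero

lemma eq_of_Lsum'_eq {w : ℂ → ℂ} {n : ℕ} (hI : toeplitzDet w n ≠ 0)
    {p q : Polynomial ℂ} (hp : p.natDegree ≤ n) (hq : q.natDegree ≤ n)
    (h : ∀ m : ℕ, m < n → Lsum' w n m p = Lsum' w n m q)
    (htop : p.coeff n = q.coeff n) : p = q := by
  have hd : (p - q).natDegree ≤ n :=
    le_trans (Polynomial.natDegree_sub_le p q) (max_le hp hq)
  have hdtop : (p - q).coeff n = 0 := by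
    rw [Polynomial.coeff_sub, htop, sub_self]
  have hdetT : (Matrix.of fun j k : Fin n => fCoeff w ((k : ℤ) - (j : ℤ))).det ≠ 0 := by
    have : (Matrix.of fun j k : Fin n => fCoeff w ((k : ℤ) - (j : ℤ)))
        = (Matrix.of fun j k : Fin n => fCoeff w ((j : ℤ) - (k : ℤ)))ᵀ := by
      ext j k; rfl
    rw [this, Matrix.det_transpose]
    exact hI
  have hker : (fun j : Fin n => (p - q).coeff j) = 0 := by
    apply vec_eq_zero _ hdetT
    funext m
    have hLs : Lsum' w n m (p - q) = 0 := by
      rw [Lsum'_sub, h m m.isLt, sub_self]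
    rw [Lsum'] at hLs
    rw [Finset.sum_range_succ, hdtop, zero_mul, add_zero] at hLs
    rw [← Fin.sum_univ_eq_sum_range (fun j => (p - q).coeff j * fCoeff w ((j:ℤ) - m)) n] at hLs
    simpa [Matrix.mulVec, dotProduct, mul_comm] using hLs
  have hzero : p - q = 0 := by
    apply Polynomial.ext
    intro k
    rcases lt_trichotomy k n with hk | hk | hk
    · have := congrFun hker ⟨k, hk⟩
      simpa using this
    · rw [hk]; simpa using hdtop
    · simp [Polynomial.coeff_eq_zero_of_natDegree_lt (lt_of_le_of_lt hd hk)]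
  exact sub_eq_zero.mp hzero

lemma eq_of_Lsum_eq_bot {w : ℂ → ℂ} {n : ℕ} (hI : toeplitzDet w n ≠ 0)
    {p q : Polynomial ℂ} (hp : p.natDegree ≤ n) (hq : q.natDegree ≤ n)
    (h : ∀ m : ℕ, 1 ≤ m → m ≤ n → Lsum w n m p = Lsum w n m q)
    (hbot : p.coeff 0 = q.coeff 0) : p = q := by
  have hd : (p - q).natDegree ≤ n :=
    le_trans (Polynomial.natDegree_sub_le p q) (max_le hp hq)
  have hdbot : (p - q).coeff 0 = 0 := by
    rw [Polynomial.coeff_sub, hbot, sub_self]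
  have hker : (fun j : Fin n => (p - q).coeff (j + 1)) = 0 := by
    apply vec_eq_zero (Matrix.of fun j k : Fin n => fCoeff w ((j : ℤ) - (k : ℤ))) hI
    funext m
    have hh := h ((m:ℕ) + 1) (by omega) (by omega)
    have hLs : Lsum w n (((m:ℕ):ℤ) + 1) (p - q) = 0 := by
      rw [Lsum_sub]
      push_cast at hh
      rw [hh, sub_self]
    rw [Lsum, Finset.sum_range_succ'] at hLs
    have hz : (p - q).coeff 0 * fCoeff w ((((m:ℕ)):ℤ) + 1 - ((0:ℕ):ℤ)) = 0 := by
      rw [hdbot, zero_mul]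
    rw [hz, add_zero] at hLs
    have hre : ∀ j : ℕ, (p - q).coeff (j + 1) * fCoeff w ((((m:ℕ)):ℤ) + 1 - ((j + 1 : ℕ):ℤ))
        = (p - q).coeff (j + 1) * fCoeff w ((m:ℤ) - (j:ℤ)) := by
      intro j
      congr 2
      push_cast
      ring
    rw [Finset.sum_congr rfl (fun j _ => hre j)] at hLs
    rw [← Fin.sum_univ_eq_sum_range (fun j => (p - q).coeff (j + 1) * fCoeff w ((m:ℤ) - j)) n]
      at hLs
    simpa [Matrix.mulVec, dotProduct, mul_comm] using hLs
  have hzero : p - q = 0 := by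
    apply Polynomial.ext
    intro k
    cases k with
    | zero => simpa using hdbot
    | succ k' =>
      rcases Nat.lt_or_ge k' n with hk | hk
      · have := congrFun hker ⟨k', hk⟩
        simpa using this
      · have : n < k' + 1 := Nat.lt_succ_of_le hk
        simp [Polynomial.coeff_eq_zero_of_natDegree_lt (lt_of_le_of_lt hd this)]
  exact sub_eq_zero.mp hzero

/-! ### bordered determinant gadgets -/

/-- Signed cofactors for expansion of `rowMat top rest` along the first row. -/
def cofR {n : ℕ} (rest : Fin n → Fin (n + 1) → ℂ) (j : Fin (n + 1)) : ℂ :=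
  (-1) ^ (j : ℕ) * (Matrix.of fun r c => rest r (j.succAbove c)).det

lemma det_rowMat {n : ℕ} (top : Fin (n + 1) → ℂ) (rest : Fin n → Fin (n + 1) → ℂ) :
    (rowMat top rest).det = ∑ j : Fin (n + 1), top j * cofR rest j := by
  rw [Matrix.det_succ_row_zero]
  apply Finset.sum_congr rfl
  intro j _
  have h1 : (rowMat top rest) 0 j = top j := rfl
  have h2 : ((rowMat top rest).submatrix Fin.succ j.succAbove)
      = (Matrix.of fun r c => rest r (j.succAbove c)) := by
    ext r c; rfl
  rw [h1, h2, cofR]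
  ring

lemma det_rowMat_dup {n : ℕ} (rest : Fin n → Fin (n + 1) → ℂ) (r₀ : Fin n) :
    (rowMat (rest r₀) rest).det = 0 := by
  apply Matrix.det_zero_of_row_eq (i := (0 : Fin (n+1))) (j := r₀.succ)
    (Fin.succ_ne_zero r₀).symm
  funext c
  rfl

/-- Matrix with a distinguished last column. -/
def colMat {n : ℕ} (v : Fin (n + 1) → ℂ) (rest : Fin (n + 1) → Fin n → ℂ) :
    Matrix (Fin (n + 1)) (Fin (n + 1)) ℂ :=
  Matrix.of fun j k => Fin.lastCases (v j) (fun c => rest j c) k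

/-- Signed cofactors for expansion of `colMat v rest` along the last column. -/
def cofC {n : ℕ} (rest : Fin (n + 1) → Fin n → ℂ) (i : Fin (n + 1)) : ℂ :=
  (-1) ^ ((i : ℕ) + n) * (Matrix.of fun r c => rest (i.succAbove r) c).det

lemma det_colMat {n : ℕ} (v : Fin (n + 1) → ℂ) (rest : Fin (n + 1) → Fin n → ℂ) :
    (colMat v rest).det = ∑ i : Fin (n + 1), v i * cofC rest i := by
  rw [Matrix.det_succ_column (colMat v rest) (Fin.last n)]
  apply Finset.sum_congr rfl
  intro i _
  have h1 : (colMat v rest) i (Fin.last n) = v i := by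
    simp [colMat]
  have h2 : ((colMat v rest).submatrix i.succAbove (Fin.last n).succAbove)
      = (Matrix.of fun r c => rest (i.succAbove r) c) := by
    ext r c
    simp [colMat, Matrix.submatrix, Fin.succAbove_last]
  rw [h1, h2, cofC]
  have : ((Fin.last n : Fin (n+1)) : ℕ) = n := rfl
  rw [this]
  ring

lemma det_colMat_dup {n : ℕ} (rest : Fin (n + 1) → Fin n → ℂ) (c₀ : Fin n) :
    (colMat (fun j => rest j c₀) rest).det = 0 := by
  apply Matrix.det_zero_of_column_eq (i := (Fin.last n)) (j := c₀.castSucc)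
    (Fin.ne_of_gt (Fin.castSucc_lt_last c₀))
  intro k
  simp [colMat]

/-! ### triangular matrices implementing column operations -/

/-- Unit upper bidiagonal matrix: `1` on the diagonal, `x` on the superdiagonal. -/
def upShift (n : ℕ) (x : ℂ) : Matrix (Fin (n + 1)) (Fin (n + 1)) ℂ :=
  Matrix.of fun i j => if i = j then 1 else if (i : ℕ) + 1 = (j : ℕ) then x else 0

lemma det_upShift (n : ℕ) (x : ℂ) : (upShift n x).det = 1 := by
  rw [Matrix.det_of_upperTriangular]
  · simp [upShift]
  · intro i j hij
    have hlt : (j : ℕ) < (i : ℕ) := hij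
    have h1 : ¬ (i = j) := by
      intro h; rw [h] at hlt; omega
    have h2 : ¬ ((i : ℕ) + 1 = (j : ℕ)) := by omega
    simp [upShift, h1, h2]

lemma upShift_decomp (n : ℕ) (x : ℂ) (m k : Fin (n + 1)) :
    upShift n x m k = (if m = k then 1 else 0) + (if (m : ℕ) + 1 = (k : ℕ) then x else 0) := by
  rcases eq_or_ne m k with h | h
  · have : ¬ ((m:ℕ) + 1 = (k:ℕ)) := by rw [h]; omega
    simp [upShift, h, this]
  · simp [upShift, h]

lemma mul_upShift {n : ℕ} (M : Matrix (Fin (n + 1)) (Fin (n + 1)) ℂ) (x : ℂ) (i k : Fin (n + 1)) :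
    (M * upShift n x) i k
      = Fin.cases (M i 0) (fun r => M i r.succ + x * M i r.castSucc) k := by
  rw [Matrix.mul_apply]
  have hsplit : ∀ m : Fin (n+1), M i m * upShift n x m k
      = (if m = k then M i m else 0) + (if (m : ℕ) + 1 = (k : ℕ) then M i m * x else 0) := by
    intro m
    rw [upShift_decomp]
    rcases eq_or_ne m k with h | h
    · simp [h]
    · simp [h]
  rw [Finset.sum_congr rfl (fun m _ => hsplit m), Finset.sum_add_distrib]
  rw [Finset.sum_ite_eq' Finset.univ k (fun m => M i m)]
  simp only [Finset.mem_univ, if_pos]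
  induction k using Fin.cases with
  | zero =>
    have hz : ∀ m : Fin (n+1), ¬ ((m:ℕ) + 1 = ((0 : Fin (n+1)):ℕ)) := by
      intro m; simp
    rw [Finset.sum_congr rfl (fun m _ => by rw [if_neg (hz m)])]
    simp
  | succ r =>
    have hcond : ∀ m : Fin (n+1), ((m:ℕ) + 1 = ((r.succ : Fin (n+1)):ℕ)) ↔ m = r.castSucc := by
      intro m
      constructor
      · intro h
        apply Fin.ext
        simp only [Fin.val_succ] at h
        simp only [Fin.coe_castSucc]
        omega
      · intro h
        rw [h]
        simp
    have : ∀ m : Fin (n+1), (if (m : ℕ) + 1 = ((r.succ : Fin (n+1)) : ℕ) then M i m * x else 0)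
        = (if m = r.castSucc then M i m * x else 0) := by
      intro m
      by_cases h : m = r.castSucc
      · rw [if_pos ((hcond m).2 h), if_pos h]
      · rw [if_neg (fun hc => h ((hcond m).1 hc)), if_neg h]
    rw [Finset.sum_congr rfl (fun m _ => this m)]
    rw [Finset.sum_ite_eq' Finset.univ r.castSucc (fun m => M i m * x)]
    simp [mul_comm]

/-- Lower bidiagonal matrix with diagonal `x` except `1` in the last slot,
and `1` on the subdiagonal. -/
def loBid (n : ℕ) (x : ℂ) : Matrix (Fin (n + 1)) (Fin (n + 1)) ℂ :=
  Matrix.of fun i j =>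
    if i = j then (if j = Fin.last n then 1 else x)
    else if (i : ℕ) = (j : ℕ) + 1 then 1 else 0

lemma det_loBid (n : ℕ) (x : ℂ) : (loBid n x).det = x ^ n := by
  rw [Matrix.det_of_lowerTriangular]
  · have : ∀ i : Fin (n+1), loBid n x i i = if i = Fin.last n then 1 else x := by
      intro i; simp [loBid]
    rw [Finset.prod_congr rfl (fun i _ => this i)]
    rw [Fin.prod_univ_castSucc]
    have h1 : ∀ c : Fin n, (if (c.castSucc : Fin (n+1)) = Fin.last n then (1:ℂ) else x) = x := by
      intro c
      rw [if_neg (Fin.ne_of_lt (Fin.castSucc_lt_last c))]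
    rw [Finset.prod_congr rfl (fun c _ => h1 c)]
    simp
  · intro i j hij
    have hlt : (i : ℕ) < (j : ℕ) := hij
    have h1 : ¬ (i = j) := by intro h; rw [h] at hlt; omega
    have h2 : ¬ ((i : ℕ) = (j : ℕ) + 1) := by omega
    simp [loBid, h1, h2]

lemma loBid_decomp (n : ℕ) (x : ℂ) (m k : Fin (n + 1)) :
    loBid n x m k = (if m = k then (if k = Fin.last n then 1 else x) else 0)
      + (if (m : ℕ) = (k : ℕ) + 1 then 1 else 0) := by
  rcases eq_or_ne m k with h | h
  · have : ¬ ((m:ℕ) = (k:ℕ) + 1) := by rw [h]; omega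
    simp [loBid, h, this]
  · simp [loBid, h]

lemma mul_loBid {n : ℕ} (M : Matrix (Fin (n + 1)) (Fin (n + 1)) ℂ) (x : ℂ) (j k : Fin (n + 1)) :
    (M * loBid n x) j k
      = Fin.lastCases (M j (Fin.last n)) (fun c => x * M j c.castSucc + M j c.succ) k := by
  rw [Matrix.mul_apply]
  have hsplit : ∀ m : Fin (n+1), M j m * loBid n x m k
      = (if m = k then M j m * (if k = Fin.last n then 1 else x) else 0)
        + (if (m : ℕ) = (k : ℕ) + 1 then M j m else 0) := by
    intro m
    rw [loBid_decomp]
    rcases eq_or_ne m k with h | h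
    · subst h
      have : ¬ ((m:ℕ) = (m:ℕ) + 1) := by omega
      simp [this, mul_add]
    · simp [h]
  rw [Finset.sum_congr rfl (fun m _ => hsplit m), Finset.sum_add_distrib]
  rw [Finset.sum_ite_eq' Finset.univ k (fun m => M j m * (if k = Fin.last n then 1 else x))]
  simp only [Finset.mem_univ, if_pos]
  induction k using Fin.lastCases with
  | last =>
    have hz : ∀ m : Fin (n+1), ¬ ((m:ℕ) = ((Fin.last n : Fin (n+1)):ℕ) + 1) := by
      intro m
      have : (m : ℕ) < n + 1 := m.isLt
      simp only [Fin.val_last]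
      omega
    rw [Finset.sum_congr rfl (fun m _ => by rw [if_neg (hz m)])]
    simp
  | cast c =>
    have hcond : ∀ m : Fin (n+1), ((m:ℕ) = ((c.castSucc : Fin (n+1)):ℕ) + 1) ↔ m = c.succ := by
      intro m
      constructor
      · intro h
        apply Fin.ext
        simp only [Fin.coe_castSucc] at h
        simp only [Fin.val_succ]
        omega
      · intro h
        rw [h]
        simp
    have hrw : ∀ m : Fin (n+1), (if (m : ℕ) = ((c.castSucc : Fin (n+1)):ℕ) + 1 then M j m else 0)
        = (if m = c.succ then M j m else 0) := by
      intro m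
      by_cases h : m = c.succ
      · rw [if_pos ((hcond m).2 h), if_pos h]
      · rw [if_neg (fun hc => h ((hcond m).1 hc)), if_neg h]
    rw [Finset.sum_congr rfl (fun m _ => hrw m)]
    rw [Finset.sum_ite_eq' Finset.univ c.succ (fun m => M j m)]
    have : ¬ ((c.castSucc : Fin (n+1)) = Fin.last n) := Fin.ne_of_lt (Fin.castSucc_lt_last c)
    simp [this, mul_comm]

/-! ### polynomials built from cofactors -/

/-- `polyOf c = ∑_j c_j X^j`. -/
def polyOf {n : ℕ} (c : Fin (n + 1) → ℂ) : Polynomial ℂ :=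
  ∑ j : Fin (n + 1), Polynomial.C (c j) * Polynomial.X ^ (j : ℕ)

/-- `polyOfRev c = ∑_j c_j X^(n-j)`. -/
def polyOfRev {n : ℕ} (c : Fin (n + 1) → ℂ) : Polynomial ℂ :=
  ∑ j : Fin (n + 1), Polynomial.C (c j) * Polynomial.X ^ (n - (j : ℕ))

lemma natDegree_polyOf {n : ℕ} (c : Fin (n + 1) → ℂ) : (polyOf c).natDegree ≤ n := by
  rw [Polynomial.natDegree_le_iff_degree_le]
  apply le_trans (Polynomial.degree_sum_le _ _)
  apply Finset.sup_le
  intro j _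
  apply le_trans (Polynomial.degree_C_mul_X_pow_le _ _)
  exact_mod_cast Nat.cast_le.2 (Nat.le_of_lt_succ j.isLt)

lemma natDegree_polyOfRev {n : ℕ} (c : Fin (n + 1) → ℂ) : (polyOfRev c).natDegree ≤ n := by
  rw [Polynomial.natDegree_le_iff_degree_le]
  apply le_trans (Polynomial.degree_sum_le _ _)
  apply Finset.sup_le
  intro j _
  apply le_trans (Polynomial.degree_C_mul_X_pow_le _ _)
  exact_mod_cast Nat.cast_le.2 (Nat.sub_le n j)

lemma coeff_polyOf_top {n : ℕ} (c : Fin (n + 1) → ℂ) : (polyOf c).coeff n = c (Fin.last n) := by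
  rw [polyOf, Polynomial.finset_sum_coeff]
  rw [Finset.sum_eq_single (Fin.last n)]
  · rw [Polynomial.coeff_C_mul_X_pow]
    simp
  · intro j _ hj
    rw [Polynomial.coeff_C_mul_X_pow, if_neg]
    intro h
    apply hj
    apply Fin.ext
    simp [← h]
  · intro h
    exact absurd (Finset.mem_univ _) h

lemma coeff_polyOfRev_top {n : ℕ} (c : Fin (n + 1) → ℂ) : (polyOfRev c).coeff n = c 0 := by
  rw [polyOfRev, Polynomial.finset_sum_coeff]
  rw [Finset.sum_eq_single (0 : Fin (n+1))]
  · rw [Polynomial.coeff_C_mul_X_pow]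
    simp
  · intro j _ hj
    rw [Polynomial.coeff_C_mul_X_pow, if_neg]
    have h1 : 1 ≤ (j : ℕ) := by
      rcases Nat.eq_zero_or_pos (j : ℕ) with h | h
      · exact absurd (Fin.ext h) hj
      · exact h
    have h2 : (j : ℕ) ≤ n := Nat.le_of_lt_succ j.isLt
    omega
  · intro h
    exact absurd (Finset.mem_univ _) h

lemma coeff_polyOf_bot {n : ℕ} (c : Fin (n + 1) → ℂ) : (polyOf c).coeff 0 = c 0 := by
  rw [polyOf, Polynomial.finset_sum_coeff]
  rw [Finset.sum_eq_single (0 : Fin (n+1))]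
  · rw [Polynomial.coeff_C_mul_X_pow]
    simp
  · intro j _ hj
    rw [Polynomial.coeff_C_mul_X_pow, if_neg]
    intro h
    apply hj
    apply Fin.ext
    simp [← h]
  · intro h
    exact absurd (Finset.mem_univ _) h

lemma eval_polyOf {n : ℕ} (c : Fin (n + 1) → ℂ) (x : ℂ) :
    (polyOf c).eval x = ∑ j : Fin (n + 1), c j * x ^ (j : ℕ) := by
  simp [polyOf, Polynomial.eval_finset_sum]

lemma eval_polyOfRev {n : ℕ} (c : Fin (n + 1) → ℂ) (x : ℂ) :
    (polyOfRev c).eval x = ∑ j : Fin (n + 1), c j * x ^ (n - (j : ℕ)) := by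
  simp [polyOfRev, Polynomial.eval_finset_sum]

lemma Lsum_finsum (w : ℂ → ℂ) (n : ℕ) (m : ℤ) {ι : Type*} (s : Finset ι) (p : ι → Polynomial ℂ) :
    Lsum w n m (∑ i ∈ s, p i) = ∑ i ∈ s, Lsum w n m (p i) := by
  unfold Lsum
  simp only [Polynomial.finset_sum_coeff, Finset.sum_mul]
  exact Finset.sum_comm

lemma Lsum'_finsum (w : ℂ → ℂ) (n : ℕ) (m : ℤ) {ι : Type*} (s : Finset ι) (p : ι → Polynomial ℂ) :
    Lsum' w n m (∑ i ∈ s, p i) = ∑ i ∈ s, Lsum' w n m (p i) := by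
  unfold Lsum'
  simp only [Polynomial.finset_sum_coeff, Finset.sum_mul]
  exact Finset.sum_comm

lemma Lsum_CXpow (w : ℂ → ℂ) (n : ℕ) (m : ℤ) (a : ℂ) (e : ℕ) (he : e ≤ n) :
    Lsum w n m (Polynomial.C a * Polynomial.X ^ e) = a * fCoeff w (m - e) := by
  unfold Lsum
  rw [Finset.sum_eq_single e]
  · rw [Polynomial.coeff_C_mul_X_pow, if_pos rfl]
  · intro j _ hj
    rw [Polynomial.coeff_C_mul_X_pow, if_neg hj, zero_mul]
  · intro h
    exact absurd (Finset.mem_range.2 (Nat.lt_succ_of_le he)) h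

lemma Lsum'_CXpow (w : ℂ → ℂ) (n : ℕ) (m : ℤ) (a : ℂ) (e : ℕ) (he : e ≤ n) :
    Lsum' w n m (Polynomial.C a * Polynomial.X ^ e) = a * fCoeff w (e - m) := by
  unfold Lsum'
  rw [Finset.sum_eq_single e]
  · rw [Polynomial.coeff_C_mul_X_pow, if_pos rfl]
  · intro j _ hj
    rw [Polynomial.coeff_C_mul_X_pow, if_neg hj, zero_mul]
  · intro h
    exact absurd (Finset.mem_range.2 (Nat.lt_succ_of_le he)) h

lemma Lsum_polyOf (w : ℂ → ℂ) (n : ℕ) (m : ℤ) (c : Fin (n + 1) → ℂ) :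
    Lsum w n m (polyOf c) = ∑ j : Fin (n + 1), c j * fCoeff w (m - (j : ℕ)) := by
  rw [polyOf, Lsum_finsum]
  apply Finset.sum_congr rfl
  intro j _
  exact Lsum_CXpow w n m (c j) j (Nat.le_of_lt_succ j.isLt)

lemma Lsum'_polyOf (w : ℂ → ℂ) (n : ℕ) (m : ℤ) (c : Fin (n + 1) → ℂ) :
    Lsum' w n m (polyOf c) = ∑ j : Fin (n + 1), c j * fCoeff w ((j : ℕ) - m) := by
  rw [polyOf, Lsum'_finsum]
  apply Finset.sum_congr rfl
  intro j _
  exact Lsum'_CXpow w n m (c j) j (Nat.le_of_lt_succ j.isLt)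

lemma Lsum_polyOfRev (w : ℂ → ℂ) (n : ℕ) (m : ℤ) (c : Fin (n + 1) → ℂ) :
    Lsum w n m (polyOfRev c) = ∑ j : Fin (n + 1), c j * fCoeff w (m - ((n - (j : ℕ) : ℕ))) := by
  rw [polyOfRev, Lsum_finsum]
  apply Finset.sum_congr rfl
  intro j _
  exact Lsum_CXpow w n m (c j) _ (Nat.sub_le n j)

/-! ### BOPS orthogonality facts -/

lemma orthPow {w : ℂ → ℂ} (hw : CInt w) (S : BOPS w) :
    ∀ m n : ℕ, m < n → circleAvg (fun ζ => w ζ * (S.φ n).eval ζ * ζ ^ (-(m:ℤ))) = 0 := by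
  intro m
  induction m using Nat.strong_induction_on with
  | _ m IH =>
    intro n hmn
    have horth := S.orth n m
    rw [if_neg (by omega : ¬ n = m)] at horth
    have hdeg : (S.φb m).natDegree ≤ m := Polynomial.natDegree_le_iff_degree_le.2 (S.degφb m)
    have hexp : circleAvg (fun ζ => w ζ * (S.φ n).eval ζ * (S.φb m).eval ζ⁻¹)
        = ∑ k ∈ Finset.range (m+1), (S.φb m).coeff k
            * circleAvg (fun ζ => w ζ * (S.φ n).eval ζ * ζ ^ (-(k:ℤ))) := by
      have h1 : circleAvg (fun ζ => w ζ * (S.φ n).eval ζ * (S.φb m).eval ζ⁻¹)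
          = circleAvg (fun ζ => ∑ k ∈ Finset.range (m+1),
              (S.φb m).coeff k * (w ζ * (S.φ n).eval ζ * ζ ^ (-(k:ℤ)))) := by
        apply circleAvg_congr
        intro ζ hζ
        have hζ0 : ζ ≠ 0 := by intro h; rw [h] at hζ; simp at hζ
        rw [Polynomial.eval_eq_sum_range' (lt_of_le_of_lt hdeg (Nat.lt_succ_self m)) ζ⁻¹]
        rw [Finset.mul_sum]
        apply Finset.sum_congr rfl
        intro k _
        have hp : (ζ⁻¹ : ℂ) ^ (k:ℕ) = ζ ^ (-(k:ℤ)) := by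
          rw [inv_pow, ← zpow_natCast ζ k, ← _root_.zpow_neg]
        rw [← hp]
        ring
      rw [h1, circleAvg_sum]
      · apply Finset.sum_congr rfl
        intro k _
        rw [circleAvg_const_mul]
      · intro k _
        exact (CInt.const _).mul ((hw.mul (CInt.eval _)).mul (CInt.zpow _))
    rw [hexp, Finset.sum_range_succ] at horth
    have hzero : ∀ k ∈ Finset.range m, (S.φb m).coeff k
        * circleAvg (fun ζ => w ζ * (S.φ n).eval ζ * ζ ^ (-(k:ℤ))) = 0 := by
      intro k hk
      rw [IH k (Finset.mem_range.1 hk) n (lt_trans (Finset.mem_range.1 hk) hmn), mul_zero]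
    rw [Finset.sum_eq_zero hzero, zero_add, S.leadφb m] at horth
    exact (mul_eq_zero.1 horth).resolve_left (S.κ_ne m)

lemma orthPow' {w : ℂ → ℂ} (hw : CInt w) (S : BOPS w) :
    ∀ m n : ℕ, m < n → circleAvg (fun ζ => w ζ * ζ ^ ((m:ℤ)) * (S.φb n).eval ζ⁻¹) = 0 := by
  intro m
  induction m using Nat.strong_induction_on with
  | _ m IH =>
    intro n hmn
    have horth := S.orth m n
    rw [if_neg (by omega : ¬ m = n)] at horth
    have hdeg : (S.φ m).natDegree ≤ m := Polynomial.natDegree_le_iff_degree_le.2 (S.degφ m)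
    have hexp : circleAvg (fun ζ => w ζ * (S.φ m).eval ζ * (S.φb n).eval ζ⁻¹)
        = ∑ k ∈ Finset.range (m+1), (S.φ m).coeff k
            * circleAvg (fun ζ => w ζ * ζ ^ ((k:ℤ)) * (S.φb n).eval ζ⁻¹) := by
      have h1 : circleAvg (fun ζ => w ζ * (S.φ m).eval ζ * (S.φb n).eval ζ⁻¹)
          = circleAvg (fun ζ => ∑ k ∈ Finset.range (m+1),
              (S.φ m).coeff k * (w ζ * ζ ^ ((k:ℤ)) * (S.φb n).eval ζ⁻¹)) := by
        apply circleAvg_congr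
        intro ζ hζ
        rw [Polynomial.eval_eq_sum_range' (lt_of_le_of_lt hdeg (Nat.lt_succ_self m)) ζ]
        rw [Finset.mul_sum, Finset.sum_mul]
        apply Finset.sum_congr rfl
        intro k _
        have hp : (ζ : ℂ) ^ (k:ℕ) = ζ ^ ((k:ℤ)) := by
          rw [← zpow_natCast ζ k]
        rw [← hp]
        ring
      rw [h1, circleAvg_sum]
      · apply Finset.sum_congr rfl
        intro k _
        rw [circleAvg_const_mul]
      · intro k _
        exact (CInt.const _).mul ((hw.mul (CInt.zpow _)).mul (CInt.evalInv _))
    rw [hexp, Finset.sum_range_succ] at horth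
    have hzero : ∀ k ∈ Finset.range m, (S.φ m).coeff k
        * circleAvg (fun ζ => w ζ * ζ ^ ((k:ℤ)) * (S.φb n).eval ζ⁻¹) = 0 := by
      intro k hk
      rw [IH k (Finset.mem_range.1 hk) n (lt_trans (Finset.mem_range.1 hk) hmn), mul_zero]
    rw [Finset.sum_eq_zero hzero, zero_add, S.leadφ m] at horth
    exact (mul_eq_zero.1 horth).resolve_left (S.κ_ne m)

lemma natDegree_phi {w : ℂ → ℂ} (S : BOPS w) (n : ℕ) : (S.φ n).natDegree ≤ n :=
  Polynomial.natDegree_le_iff_degree_le.2 (S.degφ n)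

lemma natDegree_phib {w : ℂ → ℂ} (S : BOPS w) (n : ℕ) : (S.φb n).natDegree ≤ n :=
  Polynomial.natDegree_le_iff_degree_le.2 (S.degφb n)

lemma natDegree_phis {w : ℂ → ℂ} (S : BOPS w) (n : ℕ) : (S.φs n).natDegree ≤ n := by
  rw [Polynomial.natDegree_le_iff_coeff_eq_zero]
  intro N hN
  rw [BOPS.φs, Polynomial.coeff_reflect, Polynomial.revAt_eq_self_of_lt hN]
  exact Polynomial.coeff_eq_zero_of_natDegree_lt (lt_of_le_of_lt (natDegree_phib S n) hN)

lemma coeff_phis_zero {w : ℂ → ℂ} (S : BOPS w) (n : ℕ) : (S.φs n).coeff 0 = S.κ n := by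
  rw [BOPS.φs, Polynomial.coeff_reflect, Polynomial.revAt_le (Nat.zero_le n), Nat.sub_zero]
  exact S.leadφb n

lemma eval_reflect_ne_zero {p : Polynomial ℂ} {n : ℕ} (hp : p.natDegree ≤ n) {ζ : ℂ}
    (hζ : ζ ≠ 0) : (p.reflect n).eval ζ = ζ ^ n * p.eval ζ⁻¹ := by
  have hdr : (p.reflect n).natDegree ≤ n := by
    rw [Polynomial.natDegree_le_iff_coeff_eq_zero]
    intro N hN
    rw [Polynomial.coeff_reflect, Polynomial.revAt_eq_self_of_lt hN]
    exact Polynomial.coeff_eq_zero_of_natDegree_lt (lt_of_le_of_lt hp hN)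
  rw [Polynomial.eval_eq_sum_range' (lt_of_le_of_lt hdr (Nat.lt_succ_self n)) ζ]
  rw [Polynomial.eval_eq_sum_range' (lt_of_le_of_lt hp (Nat.lt_succ_self n)) ζ⁻¹]
  have h1 : ∀ i ∈ Finset.range (n+1), (p.reflect n).coeff i * ζ ^ i
      = p.coeff (n - i) * ζ ^ i := by
    intro i hi
    rw [Polynomial.coeff_reflect, Polynomial.revAt_le (Nat.le_of_lt_succ (Finset.mem_range.1 hi))]
  rw [Finset.sum_congr rfl h1]
  rw [← Finset.sum_range_reflect (fun i => p.coeff (n - i) * ζ ^ i) (n+1)]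
  rw [Finset.mul_sum]
  apply Finset.sum_congr rfl
  intro i hi
  have hile : i ≤ n := Nat.le_of_lt_succ (Finset.mem_range.1 hi)
  have h2 : n + 1 - 1 - i = n - i := by omega
  have h3 : n - (n - i) = i := by omega
  rw [h2, h3]
  rw [pow_sub₀ ζ hζ hile, inv_pow]
  ring

lemma Lsum_phi {w : ℂ → ℂ} (hw : CInt w) (S : BOPS w) (n : ℕ) {m : ℕ} (hm : m < n) :
    Lsum w n m (S.φ n) = 0 := by
  rw [Lsum_eq_circleAvg hw (natDegree_phi S n) m]
  exact orthPow hw S m n hm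

lemma Lsum'_phib {w : ℂ → ℂ} (hw : CInt w) (S : BOPS w) (n : ℕ) {m : ℕ} (hm : m < n) :
    Lsum' w n m (S.φb n) = 0 := by
  rw [Lsum'_eq_circleAvg hw (natDegree_phib S n) m]
  exact orthPow' hw S m n hm

lemma Lsum_phis {w : ℂ → ℂ} (hw : CInt w) (S : BOPS w) {n m : ℕ} (h1 : 1 ≤ m) (h2 : m ≤ n) :
    Lsum w n m (S.φs n) = 0 := by
  rw [Lsum_eq_circleAvg hw (natDegree_phis S n) m]
  have hcongr : circleAvg (fun ζ => w ζ * (S.φs n).eval ζ * ζ ^ (-(m:ℤ)))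
      = circleAvg (fun ζ => w ζ * ζ ^ (((n - m : ℕ):ℤ)) * (S.φb n).eval ζ⁻¹) := by
    apply circleAvg_congr
    intro ζ hζ
    have hζ0 : ζ ≠ 0 := by intro h; rw [h] at hζ; simp at hζ
    rw [BOPS.φs, eval_reflect_ne_zero (natDegree_phib S n) hζ0]
    have hp : (ζ : ℂ) ^ (n:ℕ) * ζ ^ (-(m:ℤ)) = ζ ^ (((n - m : ℕ):ℤ)) := by
      rw [← zpow_natCast ζ n, ← zpow_add₀ hζ0]
      congr 1
      omega
    rw [← hp]
    ring
  rw [hcongr]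
  exact orthPow' hw S (n - m) n (by omega)

/-! ### the four bordered-determinant rest functions -/

def restA (w : ℂ → ℂ) (n : ℕ) : Fin n → Fin (n + 1) → ℂ :=
  fun r k => fCoeff w ((r : ℤ) - (k : ℤ))

def restB (w : ℂ → ℂ) (n : ℕ) : Fin n → Fin (n + 1) → ℂ :=
  fun r k => fCoeff w ((r : ℤ) - (k : ℤ) + 1)

def restC (w : ℂ → ℂ) (n : ℕ) : Fin (n + 1) → Fin n → ℂ :=
  fun j c => fCoeff w ((j : ℤ) - (c : ℤ) - 1)

def restD (w : ℂ → ℂ) (n : ℕ) : Fin n → Fin (n + 1) → ℂ :=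
  fun r j => fCoeff w ((j : ℤ) - (r : ℤ))

/-! ### key identities between cofactor polynomials and the BOPS -/

lemma keyP {w : ℂ → ℂ} (hw : CInt w) (hI : ∀ k, toeplitzDet w k ≠ 0) (S : BOPS w) (n : ℕ) :
    S.κ n • polyOf (cofR (restA w n)) = ((-1 : ℂ) ^ n * toeplitzDet w n) • S.φ n := by
  apply eq_of_Lsum_eq (hI n)
  · exact le_trans (Polynomial.natDegree_smul_le _ _) (natDegree_polyOf _)
  · exact le_trans (Polynomial.natDegree_smul_le _ _) (natDegree_phi S n)
  · intro m hm
    rw [Lsum_smul, Lsum_smul, Lsum_phi hw S n hm, mul_zero, Lsum_polyOf]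
    have hdup : (rowMat (fun k : Fin (n+1) => fCoeff w ((m : ℤ) - (k : ℤ))) (restA w n)).det
        = 0 := by
      have heq : (fun k : Fin (n+1) => fCoeff w ((m : ℤ) - (k : ℤ)))
          = restA w n ⟨m, hm⟩ := by
        funext k; rfl
      rw [heq]
      exact det_rowMat_dup _ _
    rw [det_rowMat] at hdup
    have : (∑ j : Fin (n+1), cofR (restA w n) j * fCoeff w ((m:ℤ) - ((j:ℕ):ℤ))) = 0 := by
      rw [← hdup]
      apply Finset.sum_congr rfl
      intro j _
      ring
    rw [this, mul_zero]
  · rw [Polynomial.coeff_smul, Polynomial.coeff_smul, smul_eq_mul, smul_eq_mul,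
      coeff_polyOf_top, S.leadφ n]
    have hcof : cofR (restA w n) (Fin.last n) = (-1 : ℂ) ^ n * toeplitzDet w n := by
      rw [cofR]
      have h1 : (((Fin.last n) : Fin (n+1)) : ℕ) = n := rfl
      have h2 : (Matrix.of fun r c => restA w n r ((Fin.last n).succAbove c))
          = (Matrix.of fun j k : Fin n => fCoeff w ((j : ℤ) - (k : ℤ))) := by
        ext r c
        simp [restA, Fin.succAbove_last]
      rw [h1, h2]
      rfl
    rw [hcof]
    ring

lemma keyP2 {w : ℂ → ℂ} (hw : CInt w) (hI : ∀ k, toeplitzDet w k ≠ 0) (S : BOPS w) (n : ℕ) :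
    S.κ n • polyOf (cofR (restB w n)) = (toeplitzDet w n) • S.φs n := by
  apply eq_of_Lsum_eq_bot (hI n)
  · exact le_trans (Polynomial.natDegree_smul_le _ _) (natDegree_polyOf _)
  · exact le_trans (Polynomial.natDegree_smul_le _ _) (natDegree_phis S n)
  · intro m hm1 hm2
    rw [Lsum_smul, Lsum_smul, Lsum_phis hw S hm1 hm2, mul_zero, Lsum_polyOf]
    have hmlt : m - 1 < n := by omega
    have hdup : (rowMat (fun k : Fin (n+1) => fCoeff w ((m : ℤ) - (k : ℤ))) (restB w n)).det
        = 0 := by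
      have heq : (fun k : Fin (n+1) => fCoeff w ((m : ℤ) - (k : ℤ)))
          = restB w n ⟨m - 1, hmlt⟩ := by
        funext k
        rw [restB]
        congr 1
        have : (((⟨m - 1, hmlt⟩ : Fin n) : ℕ) : ℤ) = (m : ℤ) - 1 := by
          simp only [Fin.val_mk]
          omega
        rw [this]
        ring
      rw [heq]
      exact det_rowMat_dup _ _
    rw [det_rowMat] at hdup
    have : (∑ j : Fin (n+1), cofR (restB w n) j * fCoeff w ((m:ℤ) - ((j:ℕ):ℤ))) = 0 := by
      rw [← hdup]
      apply Finset.sum_congr rfl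
      intro j _
      ring
    rw [this, mul_zero]
  · rw [Polynomial.coeff_smul, Polynomial.coeff_smul, smul_eq_mul, smul_eq_mul,
      coeff_polyOf_bot, coeff_phis_zero]
    have hcof : cofR (restB w n) 0 = toeplitzDet w n := by
      rw [cofR]
      have h2 : (Matrix.of fun r c => restB w n r ((0 : Fin (n+1)).succAbove c))
          = (Matrix.of fun j k : Fin n => fCoeff w ((j : ℤ) - (k : ℤ))) := by
        ext r c
        show fCoeff w ((r : ℤ) - ((c.succ : Fin (n+1)) : ℤ) + 1) = fCoeff w ((r : ℤ) - (c : ℤ))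
        congr 1
        have : ((c.succ : Fin (n+1)) : ℤ) = (c : ℤ) + 1 := by
          simp [Fin.val_succ]
        rw [this]
        ring
      rw [h2]
      simp
      rfl
    rw [hcof]
    ring

lemma keyQ {w : ℂ → ℂ} (hw : CInt w) (hI : ∀ k, toeplitzDet w k ≠ 0) (S : BOPS w) (n : ℕ) :
    S.κ n • polyOfRev (cofC (restC w n)) = ((-1 : ℂ) ^ n * toeplitzDet w n) • S.φ n := by
  apply eq_of_Lsum_eq (hI n)
  · exact le_trans (Polynomial.natDegree_smul_le _ _) (natDegree_polyOfRev _)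
  · exact le_trans (Polynomial.natDegree_smul_le _ _) (natDegree_phi S n)
  · intro m hm
    rw [Lsum_smul, Lsum_smul, Lsum_phi hw S n hm, mul_zero, Lsum_polyOfRev]
    have hc0 : n - m - 1 < n := by omega
    have hdup : (colMat (fun j : Fin (n+1) => fCoeff w ((m : ℤ) - ((n - (j:ℕ) : ℕ) : ℤ)))
        (restC w n)).det = 0 := by
      have heq : (fun j : Fin (n+1) => fCoeff w ((m : ℤ) - ((n - (j:ℕ) : ℕ) : ℤ)))
          = fun j => restC w n j ⟨n - m - 1, hc0⟩ := by
        funext j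
        rw [restC]
        congr 1
        have hj : (j : ℕ) ≤ n := Nat.le_of_lt_succ j.isLt
        have h1 : ((n - (j:ℕ) : ℕ) : ℤ) = (n : ℤ) - (j : ℕ) := by omega
        have h2 : (((⟨n - m - 1, hc0⟩ : Fin n) : ℕ) : ℤ) = (n : ℤ) - m - 1 := by
          simp only [Fin.val_mk]
          omega
        rw [h1, h2]
        ring
      rw [heq]
      exact det_colMat_dup _ _
    rw [det_colMat] at hdup
    have : (∑ j : Fin (n+1), cofC (restC w n) j * fCoeff w ((m:ℤ) - ((n - (j:ℕ) : ℕ):ℤ))) = 0 := by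
      rw [← hdup]
      apply Finset.sum_congr rfl
      intro j _
      ring
    rw [this, mul_zero]
  · rw [Polynomial.coeff_smul, Polynomial.coeff_smul, smul_eq_mul, smul_eq_mul,
      coeff_polyOfRev_top, S.leadφ n]
    have hcof : cofC (restC w n) 0 = (-1 : ℂ) ^ n * toeplitzDet w n := by
      rw [cofC]
      have h2 : (Matrix.of fun r c => restC w n ((0 : Fin (n+1)).succAbove r) c)
          = (Matrix.of fun j k : Fin n => fCoeff w ((j : ℤ) - (k : ℤ))) := by
        ext r c
        show fCoeff w (((r.succ : Fin (n+1)) : ℤ) - (c : ℤ) - 1) = fCoeff w ((r : ℤ) - (c : ℤ))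
        congr 1
        have : ((r.succ : Fin (n+1)) : ℤ) = (r : ℤ) + 1 := by
          simp [Fin.val_succ]
        rw [this]
        ring
      rw [h2]
      simp
      rfl
    rw [hcof]
    ring

lemma keyR {w : ℂ → ℂ} (hw : CInt w) (hI : ∀ k, toeplitzDet w k ≠ 0) (S : BOPS w) (n : ℕ) :
    S.κ n • polyOf (cofR (restD w n)) = ((-1 : ℂ) ^ n * toeplitzDet w n) • S.φb n := by
  apply eq_of_Lsum'_eq (hI n)
  · exact le_trans (Polynomial.natDegree_smul_le _ _) (natDegree_polyOf _)
  · exact le_trans (Polynomial.natDegree_smul_le _ _) (natDegree_phib S n)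
  · intro m hm
    rw [Lsum'_smul, Lsum'_smul, Lsum'_phib hw S n hm, mul_zero, Lsum'_polyOf]
    have hdup : (rowMat (fun k : Fin (n+1) => fCoeff w ((k : ℤ) - (m : ℤ))) (restD w n)).det
        = 0 := by
      have heq : (fun k : Fin (n+1) => fCoeff w ((k : ℤ) - (m : ℤ)))
          = restD w n ⟨m, hm⟩ := by
        funext k; rfl
      rw [heq]
      exact det_rowMat_dup _ _
    rw [det_rowMat] at hdup
    have : (∑ j : Fin (n+1), cofR (restD w n) j * fCoeff w (((j:ℕ):ℤ) - (m:ℤ))) = 0 := by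
      rw [← hdup]
      apply Finset.sum_congr rfl
      intro j _
      ring
    rw [this, mul_zero]
  · rw [Polynomial.coeff_smul, Polynomial.coeff_smul, smul_eq_mul, smul_eq_mul,
      coeff_polyOf_top, S.leadφb n]
    have hcof : cofR (restD w n) (Fin.last n) = (-1 : ℂ) ^ n * toeplitzDet w n := by
      rw [cofR]
      have h1 : (((Fin.last n) : Fin (n+1)) : ℕ) = n := rfl
      have h2 : (Matrix.of fun r c => restD w n r ((Fin.last n).succAbove c))
          = (Matrix.of fun j k : Fin n => fCoeff w ((j : ℤ) - (k : ℤ)))ᵀ := by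
        ext r c
        simp [restD, Fin.succAbove_last, Matrix.transpose]
      rw [h1, h2, Matrix.det_transpose]
      rfl
    rw [hcof]
    ring

/-! ### expansion of the full Toeplitz determinant along its last row -/

lemma det_toeplitz_expand (w : ℂ → ℂ) (n : ℕ) :
    toeplitzDet w (n + 1)
      = (-1 : ℂ) ^ n * (rowMat (fun k : Fin (n+1) => fCoeff w ((n : ℤ) - (k : ℤ)))
          (restA w n)).det := by
  rw [det_rowMat]
  show (Matrix.of fun j k : Fin (n+1) => fCoeff w ((j : ℤ) - (k : ℤ))).det = _
  rw [Matrix.det_succ_row (Matrix.of fun j k : Fin (n+1) => fCoeff w ((j : ℤ) - (k : ℤ)))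
    (Fin.last n)]
  rw [Finset.mul_sum]
  apply Finset.sum_congr rfl
  intro k _
  have h1 : ((Fin.last n : Fin (n+1)) : ℕ) = n := rfl
  have h2 : (Matrix.of fun j k : Fin (n+1) => fCoeff w ((j : ℤ) - (k : ℤ))).submatrix
      (Fin.last n).succAbove k.succAbove
      = (Matrix.of fun r c => restA w n r (k.succAbove c)) := by
    ext r c
    simp [restA, Fin.succAbove_last]
  rw [h2]
  have h3 : (Matrix.of fun j k : Fin (n+1) => fCoeff w ((j : ℤ) - (k : ℤ))) (Fin.last n) k
      = fCoeff w ((n : ℤ) - (k : ℤ)) := rfl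
  rw [h3, cofR, h1, pow_add]
  ring

/-! ### `κ_n² I_{n+1} = I_n` -/

lemma expand_phib {w : ℂ → ℂ} (hw : CInt w) (S : BOPS w) (N n : ℕ) :
    circleAvg (fun ζ => w ζ * (S.φ N).eval ζ * (S.φb n).eval ζ⁻¹)
      = ∑ k ∈ Finset.range (n+1), (S.φb n).coeff k
          * circleAvg (fun ζ => w ζ * (S.φ N).eval ζ * ζ ^ (-(k:ℤ))) := by
  have h1 : circleAvg (fun ζ => w ζ * (S.φ N).eval ζ * (S.φb n).eval ζ⁻¹)
      = circleAvg (fun ζ => ∑ k ∈ Finset.range (n+1),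
          (S.φb n).coeff k * (w ζ * (S.φ N).eval ζ * ζ ^ (-(k:ℤ)))) := by
    apply circleAvg_congr
    intro ζ hζ
    have hζ0 : ζ ≠ 0 := by intro h; rw [h] at hζ; simp at hζ
    rw [Polynomial.eval_eq_sum_range' (lt_of_le_of_lt (natDegree_phib S n) (Nat.lt_succ_self n)) ζ⁻¹]
    rw [Finset.mul_sum]
    apply Finset.sum_congr rfl
    intro k _
    have hp : (ζ⁻¹ : ℂ) ^ (k:ℕ) = ζ ^ (-(k:ℤ)) := by
      rw [inv_pow, ← zpow_natCast ζ k, ← _root_.zpow_neg]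
    rw [← hp]
    ring
  rw [h1, circleAvg_sum]
  · apply Finset.sum_congr rfl
    intro k _
    rw [circleAvg_const_mul]
  · intro k _
    exact (CInt.const _).mul ((hw.mul (CInt.eval _)).mul (CInt.zpow _))

lemma kappa_sq {w : ℂ → ℂ} (hw : CInt w) (hI : ∀ k, toeplitzDet w k ≠ 0) (S : BOPS w) (n : ℕ) :
    S.κ n ^ 2 * toeplitzDet w (n + 1) = toeplitzDet w n := by
  -- step 1 : κ_n * Lsum n n (φ n) = 1
  have hone : S.κ n * Lsum w n n (S.φ n) = 1 := by
    have horth := S.orth n n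
    rw [if_pos rfl, expand_phib hw S n n, Finset.sum_range_succ] at horth
    have hzero : ∀ k ∈ Finset.range n, (S.φb n).coeff k
        * circleAvg (fun ζ => w ζ * (S.φ n).eval ζ * ζ ^ (-(k:ℤ))) = 0 := by
      intro k hk
      rw [orthPow hw S k n (Finset.mem_range.1 hk), mul_zero]
    rw [Finset.sum_eq_zero hzero, zero_add, S.leadφb n] at horth
    rw [Lsum_eq_circleAvg hw (natDegree_phi S n) n]
    exact horth
  -- step 2 : toeplitzDet w n * Lsum n n (φ n) = κ_n * toeplitzDet w (n+1)
  have htwo : toeplitzDet w n * Lsum w n n (S.φ n) = S.κ n * toeplitzDet w (n + 1) := by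
    have hkey := keyP hw hI S n
    have hL := congrArg (Lsum w n n) hkey
    rw [Lsum_smul, Lsum_smul, Lsum_polyOf] at hL
    have hDn : (∑ j : Fin (n+1), cofR (restA w n) j * fCoeff w ((n:ℤ) - ((j:ℕ):ℤ)))
        = (-1:ℂ)^n * toeplitzDet w (n+1) := by
      have hexp := det_toeplitz_expand w n
      rw [det_rowMat] at hexp
      have hsum : (∑ j : Fin (n+1), fCoeff w ((n:ℤ) - (j:ℤ)) * cofR (restA w n) j)
          = (∑ j : Fin (n+1), cofR (restA w n) j * fCoeff w ((n:ℤ) - ((j:ℕ):ℤ))) := by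
        apply Finset.sum_congr rfl
        intro j _
        ring
      rw [hsum] at hexp
      have hsign : ((-1:ℂ)^n) * ((-1:ℂ)^n) = 1 := by
        rw [← pow_add, ← two_mul, pow_mul, neg_one_sq, one_pow]
      calc (∑ j : Fin (n+1), cofR (restA w n) j * fCoeff w ((n:ℤ) - ((j:ℕ):ℤ)))
          = ((-1:ℂ)^n * (-1:ℂ)^n) * (∑ j : Fin (n+1), cofR (restA w n) j
              * fCoeff w ((n:ℤ) - ((j:ℕ):ℤ))) := by rw [hsign, one_mul]
        _ = (-1:ℂ)^n * toeplitzDet w (n+1) := by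
            rw [mul_assoc, ← hexp]
    rw [hDn] at hL
    -- hL : κ_n * ((-1)^n * I_{n+1}) = (-1)^n * I_n * Lsum n n (φ n)
    have hpow : ((-1:ℂ)^n) ≠ 0 := pow_ne_zero n (by norm_num)
    apply mul_left_cancel₀ hpow
    calc (-1:ℂ)^n * (toeplitzDet w n * Lsum w n n (S.φ n))
        = ((-1:ℂ)^n * toeplitzDet w n) * Lsum w n n (S.φ n) := by ring
      _ = S.κ n * ((-1:ℂ)^n * toeplitzDet w (n+1)) := hL.symm
      _ = (-1:ℂ)^n * (S.κ n * toeplitzDet w (n + 1)) := by ring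
  calc S.κ n ^ 2 * toeplitzDet w (n + 1)
      = S.κ n * (S.κ n * toeplitzDet w (n + 1)) := by ring
    _ = S.κ n * (toeplitzDet w n * Lsum w n n (S.φ n)) := by rw [htwo]
    _ = toeplitzDet w n * (S.κ n * Lsum w n n (S.φ n)) := by ring
    _ = toeplitzDet w n := by rw [hone, mul_one]

/-! ### Fourier coefficients of modified weights -/

lemma abs_one_ne_zero {ζ : ℂ} (hζ : ‖ζ‖ = 1) : ζ ≠ 0 := by
  intro h; rw [h] at hζ; simp at hζ

lemma fc1 {w : ℂ → ℂ} (hw : CInt w) (z : ℂ) (t : ℤ) :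
    fCoeff (fun ζ => (ζ - z) * w ζ) t = fCoeff w (t - 1) - z * fCoeff w t := by
  show circleAvg (fun ζ => ((ζ - z) * w ζ) * ζ ^ (-t)) = _
  have h : circleAvg (fun ζ => ((ζ - z) * w ζ) * ζ ^ (-t))
      = circleAvg (fun ζ => (w ζ * ζ ^ (-(t-1))) - z * (w ζ * ζ ^ (-t))) := by
    apply circleAvg_congr
    intro ζ hζ
    have hζ0 := abs_one_ne_zero hζ
    have hp : ζ * ζ ^ (-t) = ζ ^ (-(t-1)) := by
      rw [show -(t-1) = -t + 1 by ring, zpow_add₀ hζ0, zpow_one]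
      ring
    calc (ζ - z) * w ζ * ζ ^ (-t) = w ζ * (ζ ^ 1 * ζ ^ (-t)) - z * (w ζ * ζ ^ (-t)) := by ring
      _ = w ζ * ζ ^ (-(t-1)) - z * (w ζ * ζ ^ (-t)) := by rw [← hp]; norm_num
  rw [h, circleAvg_sub (hw.mul (CInt.zpow _)) ((CInt.const z).mul (hw.mul (CInt.zpow _))),
    circleAvg_const_mul]
  rfl

lemma fc2 {w : ℂ → ℂ} (hw : CInt w) (z : ℂ) (t : ℤ) :
    fCoeff (fun ζ => (1 - z * ζ⁻¹) * w ζ) t = fCoeff w t - z * fCoeff w (t + 1) := by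
  show circleAvg (fun ζ => ((1 - z * ζ⁻¹) * w ζ) * ζ ^ (-t)) = _
  have h : circleAvg (fun ζ => ((1 - z * ζ⁻¹) * w ζ) * ζ ^ (-t))
      = circleAvg (fun ζ => (w ζ * ζ ^ (-t)) - z * (w ζ * ζ ^ (-(t+1)))) := by
    apply circleAvg_congr
    intro ζ hζ
    have hζ0 := abs_one_ne_zero hζ
    have hp : ζ⁻¹ * ζ ^ (-t) = ζ ^ (-(t+1)) := by
      rw [show -(t+1) = -t + (-1) by ring, zpow_add₀ hζ0, _root_.zpow_neg_one]
      ring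
    calc (1 - z * ζ⁻¹) * w ζ * ζ ^ (-t)
        = w ζ * ζ ^ (-t) - z * (w ζ * (ζ⁻¹ * ζ ^ (-t))) := by ring
      _ = w ζ * ζ ^ (-t) - z * (w ζ * ζ ^ (-(t+1))) := by rw [hp]
  rw [h, circleAvg_sub (hw.mul (CInt.zpow _)) ((CInt.const z).mul (hw.mul (CInt.zpow _))),
    circleAvg_const_mul]
  rfl

/-- `hker w z t = (1/2πi) ∮ ((ζ+z)/(ζ-z)) w(ζ) ζ^t dζ/ζ`. -/
def hker (w : ℂ → ℂ) (z : ℂ) (t : ℤ) : ℂ :=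
  circleAvg fun ζ => (ζ + z) / (ζ - z) * w ζ * ζ ^ t

lemma fc3 {w : ℂ → ℂ} (hw : CInt w) {z : ℂ} (hz : ‖z‖ ≠ 1) (t : ℤ) :
    fCoeff (fun ζ => w ζ / (1 - z * ζ⁻¹)) t = (fCoeff w t + hker w z (-t)) / 2 := by
  show circleAvg (fun ζ => (w ζ / (1 - z * ζ⁻¹)) * ζ ^ (-t)) = _
  have h : circleAvg (fun ζ => (w ζ / (1 - z * ζ⁻¹)) * ζ ^ (-t))
      = circleAvg (fun ζ => (1/2 : ℂ) * (w ζ * ζ ^ (-t))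
          + (1/2 : ℂ) * ((ζ + z) / (ζ - z) * w ζ * ζ ^ (-t))) := by
    apply circleAvg_congr
    intro ζ hζ
    have hζ0 := abs_one_ne_zero hζ
    have hne := sub_ne_zero_of_abs hζ hz
    have hζt : ζ ^ t ≠ 0 := zpow_ne_zero _ hζ0
    have hζt' : ζ ^ (-t) ≠ 0 := zpow_ne_zero _ hζ0
    have h1 : 1 - z * ζ⁻¹ = (ζ - z) * ζ⁻¹ := by
      field_simp
    rw [h1]
    field_simp
    ring
  rw [h, circleAvg_add ((CInt.const _).mul (hw.mul (CInt.zpow _)))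
    ((CInt.const _).mul (((CInt.kernel z hz).mul hw).mul (CInt.zpow _))),
    circleAvg_const_mul, circleAvg_const_mul]
  show (1/2 : ℂ) * fCoeff w t + (1/2 : ℂ) * hker w z (-t) = _
  ring

lemma fc4 {w : ℂ → ℂ} (hw : CInt w) {z : ℂ} (hz : ‖z‖ ≠ 1) (hz0 : z ≠ 0) (t : ℤ) :
    fCoeff (fun ζ => w ζ / (ζ - z)) t = (hker w z (-t) - fCoeff w t) / (2 * z) := by
  show circleAvg (fun ζ => (w ζ / (ζ - z)) * ζ ^ (-t)) = _
  have h : circleAvg (fun ζ => (w ζ / (ζ - z)) * ζ ^ (-t))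
      = circleAvg (fun ζ => (1/(2*z) : ℂ) * ((ζ + z) / (ζ - z) * w ζ * ζ ^ (-t))
          - (1/(2*z) : ℂ) * (w ζ * ζ ^ (-t))) := by
    apply circleAvg_congr
    intro ζ hζ
    have hζ0 := abs_one_ne_zero hζ
    have hne := sub_ne_zero_of_abs hζ hz
    have hζt : ζ ^ t ≠ 0 := zpow_ne_zero _ hζ0
    have hζt' : ζ ^ (-t) ≠ 0 := zpow_ne_zero _ hζ0
    field_simp
    ring
  rw [h, circleAvg_sub ((CInt.const _).mul (((CInt.kernel z hz).mul hw).mul (CInt.zpow _)))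
    ((CInt.const _).mul (hw.mul (CInt.zpow _))),
    circleAvg_const_mul, circleAvg_const_mul]
  show (1/(2*z) : ℂ) * hker w z (-t) - (1/(2*z) : ℂ) * fCoeff w t = _
  field_simp

lemma hker_rec {w : ℂ → ℂ} (hw : CInt w) {z : ℂ} (hz : ‖z‖ ≠ 1) (t : ℤ) :
    hker w z (t + 1) = z * hker w z t + fCoeff w (-t-1) + z * fCoeff w (-t) := by
  have h : circleAvg (fun ζ => (ζ + z) / (ζ - z) * w ζ * ζ ^ (t+1))
      = circleAvg (fun ζ => (z * ((ζ + z) / (ζ - z) * w ζ * ζ ^ t)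
          + w ζ * ζ ^ (-(-t-1))) + z * (w ζ * ζ ^ (-(-t)))) := by
    apply circleAvg_congr
    intro ζ hζ
    have hζ0 := abs_one_ne_zero hζ
    have hne := sub_ne_zero_of_abs hζ hz
    have hp : ζ ^ (t+1) = ζ ^ t * ζ := by
      rw [zpow_add₀ hζ0]
      norm_num
    have hp1 : ζ ^ (-(-t-1)) = ζ ^ t * ζ := by
      rw [show -(-t-1) = t + 1 by ring, hp]
    have hp2 : ζ ^ (-(-t)) = ζ ^ t := by
      rw [show -(-t) = t by ring]
    have hζt : ζ ^ t ≠ 0 := zpow_ne_zero _ hζ0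
    rw [hp, hp1, hp2]
    field_simp
    ring
  show circleAvg (fun ζ => (ζ + z) / (ζ - z) * w ζ * ζ ^ (t+1)) = _
  rw [h, circleAvg_add (((CInt.const z).mul (((CInt.kernel z hz).mul hw).mul (CInt.zpow _))).add
      (hw.mul (CInt.zpow _))) ((CInt.const z).mul (hw.mul (CInt.zpow _))),
    circleAvg_add ((CInt.const z).mul (((CInt.kernel z hz).mul hw).mul (CInt.zpow _)))
      (hw.mul (CInt.zpow _)),
    circleAvg_const_mul, circleAvg_const_mul]
  rfl

/-! ### determinant computation, statement (i) -/

lemma det_case1 {w : ℂ → ℂ} (hw : CInt w) (hI : ∀ k, toeplitzDet w k ≠ 0) (S : BOPS w)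
    (n : ℕ) (z : ℂ) :
    S.κ n * toeplitzDet (fun ζ => (ζ - z) * w ζ) n
      = ((-1:ℂ) ^ n * toeplitzDet w n) * (S.φ n).eval z := by
  set w1 : ℂ → ℂ := fun ζ => (ζ - z) * w ζ with hw1
  set B := rowMat (fun k : Fin (n+1) => z ^ (k:ℕ)) (restA w n) with hB
  set rest' : Fin n → Fin (n+1) → ℂ := fun q => Fin.cases (fCoeff w ((q:ℤ)))
      (fun r => fCoeff w1 ((q:ℤ) - (r:ℤ))) with hrest'
  have hprod : B * upShift n (-z)
      = rowMat (fun k : Fin (n+1) => if k = 0 then (1:ℂ) else 0) rest' := by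
    ext i k
    rw [mul_upShift]
    refine Fin.cases ?_ (fun r => ?_) k
    · rw [Fin.cases_zero]
      refine Fin.cases ?_ (fun q => ?_) i
      · show B 0 0 = _
        simp [hB, rowMat]
      · show B q.succ 0 = _
        simp [hB, rowMat, restA, hrest']
    · rw [Fin.cases_succ]
      refine Fin.cases ?_ (fun q => ?_) i
      · show B 0 r.succ + (-z) * B 0 r.castSucc = _
        have h1 : B 0 r.succ = z ^ ((r:ℕ) + 1) := by simp [hB, rowMat]
        have h2 : B 0 r.castSucc = z ^ ((r:ℕ)) := by simp [hB, rowMat]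
        have h3 : (rowMat (fun k : Fin (n+1) => if k = 0 then (1:ℂ) else 0) rest') 0 r.succ
            = 0 := by
          simp [rowMat, Fin.succ_ne_zero]
        rw [h1, h2, h3, pow_succ]
        ring
      · show B q.succ r.succ + (-z) * B q.succ r.castSucc = _
        have h1 : B q.succ r.succ = fCoeff w ((q:ℤ) - ((r:ℤ) + 1)) := by
          have : ((r.succ : Fin (n+1)) : ℤ) = (r:ℤ) + 1 := by
            simp [Fin.val_succ]
          simp [hB, rowMat, restA, this]
        have h2 : B q.succ r.castSucc = fCoeff w ((q:ℤ) - (r:ℤ)) := by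
          have : ((r.castSucc : Fin (n+1)) : ℤ) = (r:ℤ) := by
            simp [Fin.coe_castSucc]
          simp [hB, rowMat, restA, this]
        have h3 : (rowMat (fun k : Fin (n+1) => if k = 0 then (1:ℂ) else 0) rest') q.succ r.succ
            = fCoeff w1 ((q:ℤ) - (r:ℤ)) := by
          simp [rowMat, hrest']
        rw [h1, h2, h3, fc1 hw z ((q:ℤ) - (r:ℤ))]
        have h4 : (q:ℤ) - ((r:ℤ) + 1) = (q:ℤ) - (r:ℤ) - 1 := by ring
        rw [h4]
        ring
  have hdet1 : toeplitzDet w1 n = (B * upShift n (-z)).det := by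
    rw [hprod, det_rowMat, Finset.sum_eq_single (0 : Fin (n+1))]
    · rw [if_pos rfl, one_mul, cofR]
      have h2 : (Matrix.of fun q c => rest' q ((0 : Fin (n+1)).succAbove c))
          = Matrix.of fun j k : Fin n => fCoeff w1 ((j:ℤ) - (k:ℤ)) := by
        ext q c
        show rest' q (c.succ) = _
        simp [hrest']
      rw [h2]
      simp [toeplitzDet]
    · intro k _ hk
      rw [if_neg hk, zero_mul]
    · intro hk
      exact absurd (Finset.mem_univ _) hk
  have hBdet : B.det = (polyOf (cofR (restA w n))).eval z := by
    rw [hB, det_rowMat, eval_polyOf]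
    apply Finset.sum_congr rfl
    intro j _
    ring
  have hmul : (B * upShift n (-z)).det = B.det := by
    rw [Matrix.det_mul, det_upShift, mul_one]
  have heval : S.κ n * (polyOf (cofR (restA w n))).eval z
      = ((-1:ℂ)^n * toeplitzDet w n) * (S.φ n).eval z := by
    have hh := congrArg (Polynomial.eval z) (keyP hw hI S n)
    simpa [smul_eq_mul] using hh
  rw [hdet1, hmul, hBdet, heval]

lemma det_case2 {w : ℂ → ℂ} (hw : CInt w) (hI : ∀ k, toeplitzDet w k ≠ 0) (S : BOPS w)
    (n : ℕ) (z : ℂ) :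
    S.κ n * toeplitzDet (fun ζ => (1 - z * ζ⁻¹) * w ζ) n
      = (toeplitzDet w n) * (S.φs n).eval z := by
  set w2 : ℂ → ℂ := fun ζ => (1 - z * ζ⁻¹) * w ζ with hw2
  set B := rowMat (fun k : Fin (n+1) => z ^ (k:ℕ)) (restB w n) with hB
  set rest' : Fin n → Fin (n+1) → ℂ := fun q => Fin.cases (fCoeff w ((q:ℤ) + 1))
      (fun r => fCoeff w2 ((q:ℤ) - (r:ℤ))) with hrest'
  have hprod : B * upShift n (-z)
      = rowMat (fun k : Fin (n+1) => if k = 0 then (1:ℂ) else 0) rest' := by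
    ext i k
    rw [mul_upShift]
    refine Fin.cases ?_ (fun r => ?_) k
    · rw [Fin.cases_zero]
      refine Fin.cases ?_ (fun q => ?_) i
      · show B 0 0 = _
        simp [hB, rowMat]
      · show B q.succ 0 = _
        simp [hB, rowMat, restB, hrest']
    · rw [Fin.cases_succ]
      refine Fin.cases ?_ (fun q => ?_) i
      · show B 0 r.succ + (-z) * B 0 r.castSucc = _
        have h1 : B 0 r.succ = z ^ ((r:ℕ) + 1) := by simp [hB, rowMat]
        have h2 : B 0 r.castSucc = z ^ ((r:ℕ)) := by simp [hB, rowMat]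
        have h3 : (rowMat (fun k : Fin (n+1) => if k = 0 then (1:ℂ) else 0) rest') 0 r.succ
            = 0 := by
          simp [rowMat, Fin.succ_ne_zero]
        rw [h1, h2, h3, pow_succ]
        ring
      · show B q.succ r.succ + (-z) * B q.succ r.castSucc = _
        have h1 : B q.succ r.succ = fCoeff w ((q:ℤ) - ((r:ℤ) + 1) + 1) := by
          have : ((r.succ : Fin (n+1)) : ℤ) = (r:ℤ) + 1 := by
            simp [Fin.val_succ]
          simp [hB, rowMat, restB, this]
        have h2 : B q.succ r.castSucc = fCoeff w ((q:ℤ) - (r:ℤ) + 1) := by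
          have : ((r.castSucc : Fin (n+1)) : ℤ) = (r:ℤ) := by
            simp [Fin.coe_castSucc]
          simp [hB, rowMat, restB, this]
        have h3 : (rowMat (fun k : Fin (n+1) => if k = 0 then (1:ℂ) else 0) rest') q.succ r.succ
            = fCoeff w2 ((q:ℤ) - (r:ℤ)) := by
          simp [rowMat, hrest']
        rw [h1, h2, h3, fc2 hw z ((q:ℤ) - (r:ℤ))]
        have h4 : (q:ℤ) - ((r:ℤ) + 1) + 1 = (q:ℤ) - (r:ℤ) := by ring
        rw [h4]
        ring
  have hdet1 : toeplitzDet w2 n = (B * upShift n (-z)).det := by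
    rw [hprod, det_rowMat, Finset.sum_eq_single (0 : Fin (n+1))]
    · rw [if_pos rfl, one_mul, cofR]
      have h2 : (Matrix.of fun q c => rest' q ((0 : Fin (n+1)).succAbove c))
          = Matrix.of fun j k : Fin n => fCoeff w2 ((j:ℤ) - (k:ℤ)) := by
        ext q c
        show rest' q (c.succ) = _
        simp [hrest']
      rw [h2]
      simp [toeplitzDet]
    · intro k _ hk
      rw [if_neg hk, zero_mul]
    · intro hk
      exact absurd (Finset.mem_univ _) hk
  have hBdet : B.det = (polyOf (cofR (restB w n))).eval z := by
    rw [hB, det_rowMat, eval_polyOf]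
    apply Finset.sum_congr rfl
    intro j _
    ring
  have hmul : (B * upShift n (-z)).det = B.det := by
    rw [Matrix.det_mul, det_upShift, mul_one]
  have heval : S.κ n * (polyOf (cofR (restB w n))).eval z
      = (toeplitzDet w n) * (S.φs n).eval z := by
    have hh := congrArg (Polynomial.eval z) (keyP2 hw hI S n)
    simpa [smul_eq_mul] using hh
  rw [hdet1, hmul, hBdet, heval]

/-! ### determinant computation, statement (ii) -/

lemma hker_natCast (w : ℂ → ℂ) (z : ℂ) (e : ℕ) :
    hker w z (e : ℤ) = circleAvg (fun ζ => (ζ + z) / (ζ - z) * w ζ * ζ ^ (e : ℕ)) := by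
  unfold hker
  apply congrArg circleAvg
  funext ζ
  rw [zpow_natCast]

lemma circleAvg_kernel_smul_eval (w : ℂ → ℂ) (z c : ℂ) (p : Polynomial ℂ) :
    circleAvg (fun ζ => (ζ + z) / (ζ - z) * w ζ * (c • p).eval ζ)
      = c * circleAvg (fun ζ => (ζ + z) / (ζ - z) * w ζ * p.eval ζ) := by
  have h : (fun ζ => (ζ + z) / (ζ - z) * w ζ * (c • p).eval ζ)
      = fun ζ => c * ((ζ + z) / (ζ - z) * w ζ * p.eval ζ) := by
    funext ζ
    rw [Polynomial.eval_smul, smul_eq_mul]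
    ring
  rw [h, circleAvg_const_mul]

lemma circleAvg_kernel_smul_evalInv (w : ℂ → ℂ) (z c : ℂ) (p : Polynomial ℂ) :
    circleAvg (fun ζ => (ζ + z) / (ζ - z) * w ζ * (c • p).eval ζ⁻¹)
      = c * circleAvg (fun ζ => (ζ + z) / (ζ - z) * w ζ * p.eval ζ⁻¹) := by
  have h : (fun ζ => (ζ + z) / (ζ - z) * w ζ * (c • p).eval ζ⁻¹)
      = fun ζ => c * ((ζ + z) / (ζ - z) * w ζ * p.eval ζ⁻¹) := by
    funext ζ
    rw [Polynomial.eval_smul, smul_eq_mul]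
    ring
  rw [h, circleAvg_const_mul]

lemma det_case3 {w : ℂ → ℂ} (hw : CInt w) (hI : ∀ k, toeplitzDet w k ≠ 0) (S : BOPS w)
    {n : ℕ} (hn : 1 ≤ n) {z : ℂ} (hz : ‖z‖ ≠ 1) :
    (2 : ℂ) * S.κ n * ((-z) ^ n * toeplitzDet (fun ζ => w ζ / (1 - z * ζ⁻¹)) (n+1))
      = ((-1:ℂ) ^ n * toeplitzDet w n)
          * circleAvg (fun ζ => (ζ + z) / (ζ - z) * w ζ * (S.φ n).eval ζ) := by
  set v1 : ℂ → ℂ := fun ζ => w ζ / (1 - z * ζ⁻¹) with hv1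
  set G := (Matrix.of fun j k : Fin (n+1) => fCoeff v1 ((j:ℤ) - (k:ℤ))) with hG
  have hGdet : toeplitzDet v1 (n+1) = G.det := rfl
  set vv : Fin (n+1) → ℂ :=
    fun j => (fCoeff w ((j:ℤ) - (n:ℤ)) + hker w z ((n:ℤ) - (j:ℤ))) / 2 with hvv
  have hcol : G * loBid n (-z) = colMat vv (restC w n) := by
    ext j k
    rw [mul_loBid]
    refine Fin.lastCases ?_ (fun c => ?_) k
    · rw [Fin.lastCases_last]
      have h1 : G j (Fin.last n) = fCoeff v1 ((j:ℤ) - (n:ℤ)) := by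
        have : ((Fin.last n : Fin (n+1)) : ℤ) = (n : ℤ) := by simp
        simp [hG, this]
      have h2 : (colMat vv (restC w n)) j (Fin.last n) = vv j := by
        simp [colMat]
      rw [h1, h2, fc3 hw hz, hvv]
      have : -((j:ℤ) - (n:ℤ)) = (n:ℤ) - (j:ℤ) := by ring
      rw [this]
    · rw [Fin.lastCases_castSucc]
      have hc1 : ((c.castSucc : Fin (n+1)) : ℤ) = (c:ℤ) := by simp
      have hc2 : ((c.succ : Fin (n+1)) : ℤ) = (c:ℤ) + 1 := by simp
      have h1 : G j c.castSucc = (fCoeff w ((j:ℤ) - (c:ℤ)) + hker w z ((c:ℤ) - (j:ℤ))) / 2 := by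
        show fCoeff v1 ((j:ℤ) - ((c.castSucc : Fin (n+1)):ℤ)) = _
        rw [hc1, fc3 hw hz]
        have : -((j:ℤ) - (c:ℤ)) = (c:ℤ) - (j:ℤ) := by ring
        rw [this]
      have h2 : G j c.succ
          = (fCoeff w ((j:ℤ) - (c:ℤ) - 1) + hker w z ((c:ℤ) - (j:ℤ) + 1)) / 2 := by
        show fCoeff v1 ((j:ℤ) - ((c.succ : Fin (n+1)):ℤ)) = _
        rw [hc2, fc3 hw hz]
        have h3 : (j:ℤ) - ((c:ℤ) + 1) = (j:ℤ) - (c:ℤ) - 1 := by ring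
        rw [h3, show -((j:ℤ) - (c:ℤ) - 1) = (c:ℤ) - (j:ℤ) + 1 by ring]
      have h5 : (colMat vv (restC w n)) j c.castSucc = fCoeff w ((j:ℤ) - (c:ℤ) - 1) := by
        simp [colMat, restC]
      rw [h1, h2, h5, hker_rec hw hz ((c:ℤ) - (j:ℤ))]
      have h6 : -((c:ℤ) - (j:ℤ)) - 1 = (j:ℤ) - (c:ℤ) - 1 := by ring
      have h7 : -((c:ℤ) - (j:ℤ)) = (j:ℤ) - (c:ℤ) := by ring
      rw [h6, h7]
      ring
  have hdet2 : G.det * (-z) ^ n = (colMat vv (restC w n)).det := by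
    rw [← hcol, Matrix.det_mul, det_loBid]
  have hzero : (∑ j : Fin (n+1), fCoeff w ((j:ℤ) - (n:ℤ)) * cofC (restC w n) j) = 0 := by
    have hc0 : n - 1 < n := by omega
    have heq : (fun j : Fin (n+1) => fCoeff w ((j:ℤ) - (n:ℤ)))
        = fun j => restC w n j ⟨n - 1, hc0⟩ := by
      funext j
      rw [restC]
      congr 1
      have : (((⟨n - 1, hc0⟩ : Fin n) : ℕ) : ℤ) = (n : ℤ) - 1 := by
        simp only [Fin.val_mk]
        omega
      rw [this]
      ring
    have hdup := det_colMat_dup (restC w n) ⟨n - 1, hc0⟩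
    rw [det_colMat] at hdup
    rw [← hdup]
    apply Finset.sum_congr rfl
    intro j _
    rw [congrFun heq j]
  have hsum2 : (∑ j : Fin (n+1), hker w z ((n:ℤ) - (j:ℤ)) * cofC (restC w n) j)
      = circleAvg (fun ζ => (ζ + z) / (ζ - z) * w ζ
          * (polyOfRev (cofC (restC w n))).eval ζ) := by
    have hterm : ∀ j : Fin (n+1), hker w z ((n:ℤ) - (j:ℤ)) * cofC (restC w n) j
        = cofC (restC w n) j * circleAvg (fun ζ => (ζ + z) / (ζ - z) * w ζ
            * ζ ^ ((n - (j:ℕ) : ℕ))) := by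
      intro j
      have hj : (j:ℕ) ≤ n := Nat.le_of_lt_succ j.isLt
      have h1 : ((n:ℤ) - (j:ℤ)) = (((n - (j:ℕ) : ℕ)) : ℤ) := by omega
      rw [h1, hker_natCast]
      ring
    rw [Finset.sum_congr rfl (fun j _ => hterm j)]
    have h2 : circleAvg (fun ζ => (ζ + z) / (ζ - z) * w ζ * (polyOfRev (cofC (restC w n))).eval ζ)
        = circleAvg (fun ζ => ∑ j : Fin (n+1), cofC (restC w n) j
            * ((ζ + z) / (ζ - z) * w ζ * ζ ^ ((n - (j:ℕ) : ℕ)))) := by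
      apply circleAvg_congr
      intro ζ hζ
      rw [eval_polyOfRev, Finset.mul_sum]
      apply Finset.sum_congr rfl
      intro j _
      ring
    rw [h2, circleAvg_sum]
    · apply Finset.sum_congr rfl
      intro j _
      rw [circleAvg_const_mul]
    · intro j _
      exact (CInt.const _).mul (((CInt.kernel z hz).mul hw).mul (by
        show CInt fun ζ : ℂ => ζ ^ ((n - (j:ℕ) : ℕ))
        have : (fun ζ : ℂ => ζ ^ ((n - (j:ℕ) : ℕ))) = fun ζ : ℂ => ζ ^ (((n - (j:ℕ) : ℕ)):ℤ) := by
          funext ζ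
          rw [zpow_natCast]
        rw [this]
        exact CInt.zpow _))
  have hkeyint : S.κ n * circleAvg (fun ζ => (ζ + z) / (ζ - z) * w ζ
        * (polyOfRev (cofC (restC w n))).eval ζ)
      = ((-1:ℂ)^n * toeplitzDet w n)
          * circleAvg (fun ζ => (ζ + z) / (ζ - z) * w ζ * (S.φ n).eval ζ) := by
    have hh := congrArg (fun p : Polynomial ℂ =>
      circleAvg (fun ζ => (ζ + z) / (ζ - z) * w ζ * p.eval ζ)) (keyQ hw hI S n)
    beta_reduce at hh
    rw [circleAvg_kernel_smul_eval, circleAvg_kernel_smul_eval] at hh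
    exact hh
  have hvsum : (colMat vv (restC w n)).det
      = (1/2 : ℂ) * circleAvg (fun ζ => (ζ + z) / (ζ - z) * w ζ
          * (polyOfRev (cofC (restC w n))).eval ζ) := by
    rw [det_colMat]
    have hsplit : (∑ j : Fin (n+1), vv j * cofC (restC w n) j)
        = (1/2 : ℂ) * (∑ j : Fin (n+1), fCoeff w ((j:ℤ) - (n:ℤ)) * cofC (restC w n) j)
          + (1/2 : ℂ) * (∑ j : Fin (n+1), hker w z ((n:ℤ) - (j:ℤ)) * cofC (restC w n) j) := by
      rw [Finset.mul_sum, Finset.mul_sum, ← Finset.sum_add_distrib]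
      apply Finset.sum_congr rfl
      intro j _
      rw [hvv]
      ring
    rw [hsplit, hzero, hsum2]
    ring
  calc (2 : ℂ) * S.κ n * ((-z) ^ n * toeplitzDet v1 (n+1))
      = (2 : ℂ) * S.κ n * (G.det * (-z) ^ n) := by rw [hGdet]; ring
    _ = (2 : ℂ) * S.κ n * ((1/2 : ℂ) * circleAvg (fun ζ => (ζ + z) / (ζ - z) * w ζ
          * (polyOfRev (cofC (restC w n))).eval ζ)) := by rw [hdet2, hvsum]
    _ = S.κ n * circleAvg (fun ζ => (ζ + z) / (ζ - z) * w ζ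
          * (polyOfRev (cofC (restC w n))).eval ζ) := by ring
    _ = ((-1:ℂ)^n * toeplitzDet w n)
          * circleAvg (fun ζ => (ζ + z) / (ζ - z) * w ζ * (S.φ n).eval ζ) := hkeyint

lemma det_case4 {w : ℂ → ℂ} (hw : CInt w) (hI : ∀ k, toeplitzDet w k ≠ 0) (S : BOPS w)
    {n : ℕ} (hn : 1 ≤ n) {z : ℂ} (hz : ‖z‖ ≠ 1) (hz0 : z ≠ 0) :
    (2 : ℂ) * z * S.κ n * toeplitzDet (fun ζ => w ζ / (ζ - z)) (n+1)
      = ((-1:ℂ) ^ n * toeplitzDet w n)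
          * circleAvg (fun ζ => (ζ + z) / (ζ - z) * w ζ * (S.φb n).eval ζ⁻¹) := by
  set v2 : ℂ → ℂ := fun ζ => w ζ / (ζ - z) with hv2
  set G := (Matrix.of fun j k : Fin (n+1) => fCoeff v2 ((j:ℤ) - (k:ℤ))) with hG
  have hGdet : toeplitzDet v2 (n+1) = G.det := rfl
  set tt : Fin (n+1) → ℂ :=
    fun j => (hker w z (-(j:ℤ)) - fCoeff w ((j:ℤ))) / (2 * z) with htt
  have hrowe : (G * upShift n (-z))ᵀ = rowMat tt (restD w n) := by
    ext i j
    show (G * upShift n (-z)) j i = _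
    rw [mul_upShift]
    refine Fin.cases ?_ (fun r => ?_) i
    · rw [Fin.cases_zero]
      have h1 : G j 0 = fCoeff v2 ((j:ℤ)) := by
        have : (((0 : Fin (n+1))) : ℤ) = 0 := by simp
        simp [hG, this]
      have h2 : (rowMat tt (restD w n)) 0 j = tt j := by
        simp [rowMat]
      rw [h1, h2, fc4 hw hz hz0, htt]
    · rw [Fin.cases_succ]
      have hc1 : ((r.castSucc : Fin (n+1)) : ℤ) = (r:ℤ) := by simp
      have hc2 : ((r.succ : Fin (n+1)) : ℤ) = (r:ℤ) + 1 := by simp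
      have h1 : G j r.succ
          = (hker w z ((r:ℤ) - (j:ℤ) + 1) - fCoeff w ((j:ℤ) - (r:ℤ) - 1)) / (2 * z) := by
        show fCoeff v2 ((j:ℤ) - ((r.succ : Fin (n+1)):ℤ)) = _
        rw [hc2, fc4 hw hz hz0]
        have h3 : (j:ℤ) - ((r:ℤ) + 1) = (j:ℤ) - (r:ℤ) - 1 := by ring
        rw [h3, show -((j:ℤ) - (r:ℤ) - 1) = (r:ℤ) - (j:ℤ) + 1 by ring]
      have h2 : G j r.castSucc
          = (hker w z ((r:ℤ) - (j:ℤ)) - fCoeff w ((j:ℤ) - (r:ℤ))) / (2 * z) := by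
        show fCoeff v2 ((j:ℤ) - ((r.castSucc : Fin (n+1)):ℤ)) = _
        rw [hc1, fc4 hw hz hz0]
        rw [show -((j:ℤ) - (r:ℤ)) = (r:ℤ) - (j:ℤ) by ring]
      have h5 : (rowMat tt (restD w n)) r.succ j = fCoeff w ((j:ℤ) - (r:ℤ)) := by
        simp [rowMat, restD]
      rw [h1, h2, h5, hker_rec hw hz ((r:ℤ) - (j:ℤ))]
      rw [show -((r:ℤ) - (j:ℤ)) - 1 = (j:ℤ) - (r:ℤ) - 1 by ring,
        show -((r:ℤ) - (j:ℤ)) = (j:ℤ) - (r:ℤ) by ring]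
      field_simp
      ring
  have hdet2 : G.det = (rowMat tt (restD w n)).det := by
    rw [← hrowe, Matrix.det_transpose, Matrix.det_mul, det_upShift, mul_one]
  have hzero : (∑ j : Fin (n+1), fCoeff w ((j:ℤ)) * cofR (restD w n) j) = 0 := by
    have hr0 : 0 < n := hn
    have heq : (fun j : Fin (n+1) => fCoeff w ((j:ℤ)))
        = restD w n ⟨0, hr0⟩ := by
      funext j
      rw [restD]
      try congr 1
      try simp
      try omega
    have hdup := det_rowMat_dup (restD w n) ⟨0, hr0⟩
    rw [det_rowMat] at hdup
    rw [← hdup]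
    apply Finset.sum_congr rfl
    intro j _
    rw [congrFun heq j]
  have hsum2 : (∑ j : Fin (n+1), hker w z (-(j:ℤ)) * cofR (restD w n) j)
      = circleAvg (fun ζ => (ζ + z) / (ζ - z) * w ζ
          * (polyOf (cofR (restD w n))).eval ζ⁻¹) := by
    have h2 : circleAvg (fun ζ => (ζ + z) / (ζ - z) * w ζ
          * (polyOf (cofR (restD w n))).eval ζ⁻¹)
        = circleAvg (fun ζ => ∑ j : Fin (n+1), cofR (restD w n) j
            * ((ζ + z) / (ζ - z) * w ζ * ζ ^ (-(j:ℤ)))) := by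
      apply circleAvg_congr
      intro ζ hζ
      have hζ0 := abs_one_ne_zero hζ
      rw [eval_polyOf, Finset.mul_sum]
      apply Finset.sum_congr rfl
      intro j _
      have hp : (ζ⁻¹ : ℂ) ^ (j:ℕ) = ζ ^ (-(j:ℤ)) := by
        rw [inv_pow, ← zpow_natCast ζ (j:ℕ), ← _root_.zpow_neg]
      rw [← hp]
      ring
    rw [h2, circleAvg_sum]
    · apply Finset.sum_congr rfl
      intro j _
      rw [circleAvg_const_mul]
      show hker w z (-(j:ℤ)) * cofR (restD w n) j
          = cofR (restD w n) j * hker w z (-(j:ℤ))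
      ring
    · intro j _
      exact (CInt.const _).mul (((CInt.kernel z hz).mul hw).mul (CInt.zpow _))
  have hkeyint : S.κ n * circleAvg (fun ζ => (ζ + z) / (ζ - z) * w ζ
        * (polyOf (cofR (restD w n))).eval ζ⁻¹)
      = ((-1:ℂ)^n * toeplitzDet w n)
          * circleAvg (fun ζ => (ζ + z) / (ζ - z) * w ζ * (S.φb n).eval ζ⁻¹) := by
    have hh := congrArg (fun p : Polynomial ℂ =>
      circleAvg (fun ζ => (ζ + z) / (ζ - z) * w ζ * p.eval ζ⁻¹)) (keyR hw hI S n)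
    beta_reduce at hh
    rw [circleAvg_kernel_smul_evalInv, circleAvg_kernel_smul_evalInv] at hh
    exact hh
  have hvsum : (rowMat tt (restD w n)).det
      = (1/(2*z) : ℂ) * circleAvg (fun ζ => (ζ + z) / (ζ - z) * w ζ
          * (polyOf (cofR (restD w n))).eval ζ⁻¹) := by
    rw [det_rowMat]
    have hsplit : (∑ j : Fin (n+1), tt j * cofR (restD w n) j)
        = (1/(2*z) : ℂ) * (∑ j : Fin (n+1), hker w z (-(j:ℤ)) * cofR (restD w n) j)
          - (1/(2*z) : ℂ) * (∑ j : Fin (n+1), fCoeff w ((j:ℤ)) * cofR (restD w n) j) := by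
      rw [Finset.mul_sum, Finset.mul_sum, ← Finset.sum_sub_distrib]
      apply Finset.sum_congr rfl
      intro j _
      rw [htt]
      field_simp
    rw [hsplit, hzero, hsum2]
    ring
  calc (2 : ℂ) * z * S.κ n * toeplitzDet v2 (n+1)
      = (2 : ℂ) * z * S.κ n * ((1/(2*z) : ℂ) * circleAvg (fun ζ => (ζ + z) / (ζ - z) * w ζ
          * (polyOf (cofR (restD w n))).eval ζ⁻¹)) := by rw [hGdet, hdet2, hvsum]
    _ = S.κ n * circleAvg (fun ζ => (ζ + z) / (ζ - z) * w ζ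
          * (polyOf (cofR (restD w n))).eval ζ⁻¹) := by
        field_simp
    _ = ((-1:ℂ)^n * toeplitzDet w n)
          * circleAvg (fun ζ => (ζ + z) / (ζ - z) * w ζ * (S.φb n).eval ζ⁻¹) := hkeyint

/-! ### small helpers for the base case -/

lemma toeplitzDet_one (v : ℂ → ℂ) : toeplitzDet v 1 = fCoeff v 0 := by
  show (Matrix.of fun j k : Fin 1 => fCoeff v ((j:ℤ) - (k:ℤ))).det = _
  rw [Matrix.det_fin_one]
  norm_num

lemma toeplitzDet_zero (v : ℂ → ℂ) : toeplitzDet v 0 = 1 := by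
  show (Matrix.of fun j k : Fin 0 => fCoeff v ((j:ℤ) - (k:ℤ))).det = 1
  exact Matrix.det_fin_zero

lemma hker_zero_eq_cara (w : ℂ → ℂ) (z : ℂ) : hker w z 0 = cara w z := by
  unfold hker cara
  apply congrArg circleAvg
  funext ζ
  rw [zpow_zero, mul_one]

end BOPSAux
end BOPSAuxSec

/-- Toeplitz determinants of elementarily modified weights in terms of the
bi-orthogonal polynomials and associated functions of the original weight. -/
theorem toeplitz_of_modified_weights (w : ℂ → ℂ)
    (hw : ContinuousOn w (Metric.sphere (0 : ℂ) 1))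
    (hI : ∀ n, toeplitzDet w n ≠ 0) (S : BOPS w) :
    (∀ (n : ℕ) (z : ℂ),
      toeplitzDet (fun ζ => (ζ - z) * w ζ) n
          = (-1) ^ n * toeplitzDet w n * ((S.φ n).eval z / S.κ n) ∧
      toeplitzDet (fun ζ => (1 - z * ζ⁻¹) * w ζ) n
          = toeplitzDet w n * ((S.φs n).eval z / S.κ n)) ∧
    (∀ (n : ℕ) (z : ℂ), ‖z‖ ≠ 1 → z ≠ 0 →
      toeplitzDet (fun ζ => w ζ / (1 - z * ζ⁻¹)) (n + 1)
          = toeplitzDet w (n + 1) * (S.κ n * S.ξ n z / (2 * z ^ n)) ∧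
      toeplitzDet (fun ζ => w ζ / (ζ - z)) (n + 1)
          = (-1) ^ (n + 1) * toeplitzDet w (n + 1)
              * (S.κ n * S.ξs n z / (2 * z ^ (n + 1)))) := by
  have hw' : BOPSAux.CInt w := BOPSAux.CInt.of_continuousOn hw
  constructor
  · intro n z
    have hκ := S.κ_ne n
    constructor
    · have h := BOPSAux.det_case1 hw' hI S n z
      apply mul_left_cancel₀ hκ
      rw [h]
      field_simp
      try ring
    · have h := BOPSAux.det_case2 hw' hI S n z
      apply mul_left_cancel₀ hκ
      rw [h]
      field_simp
  · intro n z hz hz0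
    cases n with
    | zero =>
      have hκ := S.κ_ne 0
      have hk : S.κ 0 ^ 2 * toeplitzDet w 1 = 1 := by
        have := BOPSAux.kappa_sq hw' hI S 0
        rwa [BOPSAux.toeplitzDet_zero] at this
      constructor
      · rw [BOPSAux.toeplitzDet_one, BOPSAux.fc3 hw' hz 0]
        rw [show (-(0:ℤ)) = 0 by ring, BOPSAux.hker_zero_eq_cara]
        simp only [pow_zero, BOPS.ξ]
        have hr : toeplitzDet w 1 * (S.κ 0 * (S.κ 0 * (fCoeff w 0 + cara w z)) / (2 * 1))
            = (S.κ 0 ^ 2 * toeplitzDet w 1) * ((fCoeff w 0 + cara w z) / 2) := by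
          ring
        rw [hr, hk, one_mul]
      · rw [BOPSAux.toeplitzDet_one, BOPSAux.fc4 hw' hz hz0 0]
        rw [show (-(0:ℤ)) = 0 by ring, BOPSAux.hker_zero_eq_cara]
        simp only [zero_add, pow_one, BOPS.ξs]
        have hr : (-1:ℂ) * toeplitzDet w 1
              * (S.κ 0 * (S.κ 0 * (fCoeff w 0 - cara w z)) / (2 * z))
            = (S.κ 0 ^ 2 * toeplitzDet w 1) * ((cara w z - fCoeff w 0) / (2 * z)) := by
          ring
        rw [hr, hk, one_mul]
    | succ m =>
      have hκ := S.κ_ne (m + 1)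
      have hk := BOPSAux.kappa_sq hw' hI S (m + 1)
      have hzn : z ^ (m + 1) ≠ 0 := pow_ne_zero _ hz0
      have hAne : ((-1:ℂ)) ^ (m+1) ≠ 0 := pow_ne_zero _ (by norm_num)
      constructor
      · have h3 := BOPSAux.det_case3 hw' hI S (Nat.succ_le_succ (Nat.zero_le m)) hz
        simp only [Nat.succ_eq_add_one] at h3
        have hξ : S.ξ (m + 1) z
            = circleAvg (fun ζ => (ζ + z) / (ζ - z) * w ζ * (S.φ (m + 1)).eval ζ) := by
          simp [BOPS.ξ]
        rw [← hξ] at h3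
        rw [neg_pow] at h3
        set T : ℂ := toeplitzDet (fun ζ => w ζ / (1 - z * ζ⁻¹)) (m + 1 + 1) with hT
        have h3' : (2:ℂ) * S.κ (m+1) * (z ^ (m+1) * T)
            = toeplitzDet w (m+1) * S.ξ (m+1) z := by
          apply mul_left_cancel₀ hAne
          calc ((-1:ℂ))^(m+1) * ((2:ℂ) * S.κ (m+1) * (z ^ (m+1) * T))
              = ((-1:ℂ))^(m+1) * toeplitzDet w (m+1) * S.ξ (m+1) z := by
                linear_combination h3
            _ = ((-1:ℂ))^(m+1) * (toeplitzDet w (m+1) * S.ξ (m+1) z) := by ring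
        have hden : (2:ℂ) * S.κ (m+1) * z ^ (m+1) ≠ 0 :=
          mul_ne_zero (mul_ne_zero two_ne_zero hκ) hzn
        apply mul_left_cancel₀ hden
        have hcan : (2:ℂ) * z ^ (m+1) * (S.κ (m+1) * S.ξ (m+1) z / (2 * z ^ (m+1)))
            = S.κ (m+1) * S.ξ (m+1) z := by
          rw [mul_comm]
          exact div_mul_cancel₀ _ (mul_ne_zero two_ne_zero hzn)
        calc (2:ℂ) * S.κ (m+1) * z ^ (m+1) * T
            = (2:ℂ) * S.κ (m+1) * (z ^ (m+1) * T) := by ring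
          _ = toeplitzDet w (m+1) * S.ξ (m+1) z := h3'
          _ = (S.κ (m+1) ^ 2 * toeplitzDet w (m+1+1)) * S.ξ (m+1) z := by rw [hk]
          _ = S.κ (m+1) * toeplitzDet w (m+1+1) * (S.κ (m+1) * S.ξ (m+1) z) := by ring
          _ = S.κ (m+1) * toeplitzDet w (m+1+1)
              * ((2:ℂ) * z ^ (m+1) * (S.κ (m+1) * S.ξ (m+1) z / (2 * z ^ (m+1)))) := by
                rw [hcan]
          _ = (2:ℂ) * S.κ (m+1) * z ^ (m+1)
              * (toeplitzDet w (m+1+1) * (S.κ (m+1) * S.ξ (m+1) z / (2 * z ^ (m+1)))) := by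
                ring
      · have h4 := BOPSAux.det_case4 hw' hI S (Nat.succ_le_succ (Nat.zero_le m)) hz hz0
        simp only [Nat.succ_eq_add_one] at h4
        set SA : ℂ := circleAvg (fun ζ => (ζ + z) / (ζ - z) * w ζ * (S.φb (m+1)).eval ζ⁻¹)
          with hSA
        have hξs : S.ξs (m + 1) z = -z ^ (m+1) * SA := by
          simp [BOPS.ξs, hSA]
        rw [hξs]
        set T : ℂ := toeplitzDet (fun ζ => w ζ / (ζ - z)) (m + 1 + 1) with hT
        have hden : (2:ℂ) * z * S.κ (m+1) ≠ 0 :=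
          mul_ne_zero (mul_ne_zero two_ne_zero hz0) hκ
        apply mul_left_cancel₀ hden
        have hsmall : (2:ℂ) * z * (S.κ (m+1) * (-z ^ (m+1) * SA) / (2 * z ^ (m+1+1)))
            = -(S.κ (m+1) * SA) := by
          rw [pow_succ]
          field_simp
          ring
        calc (2:ℂ) * z * S.κ (m+1) * T
            = ((-1:ℂ))^(m+1) * toeplitzDet w (m+1) * SA := h4
          _ = ((-1:ℂ))^(m+1) * (S.κ (m+1) ^ 2 * toeplitzDet w (m+1+1)) * SA := by rw [hk]
          _ = S.κ (m+1) * ((-1:ℂ))^(m+1+1) * toeplitzDet w (m+1+1) * (-(S.κ (m+1) * SA)) := by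
              rw [pow_succ]
              ring
          _ = S.κ (m+1) * ((-1:ℂ))^(m+1+1) * toeplitzDet w (m+1+1)
              * ((2:ℂ) * z * (S.κ (m+1) * (-z ^ (m+1) * SA) / (2 * z ^ (m+1+1)))) := by
              rw [hsmall]
          _ = (2:ℂ) * z * S.κ (m+1) * (((-1:ℂ))^(m+1+1) * toeplitzDet w (m+1+1)
              * (S.κ (m+1) * (-z ^ (m+1) * SA) / (2 * z ^ (m+1+1)))) := by
              ring
end
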